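/- arXiv:2004.07298 — 6 statements merged into one kernel-verified Lean document; each statement's English description precedes it below -/
import Mathlib

section
/- Assume μ(τ) ≠ 0 and that τ satisfies exponential large deviation bounds: for each ε > 0 there exist C, δ > 0 with μ(‖τ_N/N − μ(τ)‖ ≥ ε) ≤ C e^{−δN} for all N ≥ 1. Let A₁, A₂ : X → ℝ and B₁, B₂ : Y → ℝ be bounded measurable functions such that for some constants C_f, c_f, C_G, κ > 0: |μ(A₁ · (A₂ ∘ f^N)) − μ(A₁)μ(A₂)| ≤ C_f e^{−c_f N} for all N ≥ 1, and |ν(B₁ · (B₂ ∘ G_t)) − ν(B₁)ν(B₂)| ≤ C_G e^{−κ‖t‖} for all t ∈ ℝ^d. Then, with Φ_i(x, y) = A_i(x)B_i(y), there exist C', δ' > 0 such that |∫ Φ₁ · (Φ₂ ∘ F^N) dζ − (∫ Φ₁ dζ)(∫ Φ₂ dζ)| ≤ C' e^{−δ'N} for all N ≥ 1. -/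
open MeasureTheory Filter Topology

/-- Birkhoff sums `τ_N(x) = ∑_{n<N} τ(f^n x)` of an `ℝ^d`-valued observable. -/
noncomputable def birkhoff {X : Type*} {d : ℕ} (f : X → X)
    (τ : X → EuclideanSpace ℝ (Fin d)) (N : ℕ) (x : X) : EuclideanSpace ℝ (Fin d) :=
  ∑ n ∈ Finset.range N, τ (f^[n] x)

/-- The generalized `T,T⁻¹` (skew product) map `F(x,y) = (f x, G_{τ(x)} y)`. -/
def skew {X Y : Type*} {d : ℕ} (f : X → X) (G : EuclideanSpace ℝ (Fin d) → Y → Y)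
    (τ : X → EuclideanSpace ℝ (Fin d)) : X × Y → X × Y :=
  fun q => (f q.1, G (τ q.1) q.2)

lemma skew_iterate {X Y : Type*} {d : ℕ} (f : X → X)
    (G : EuclideanSpace ℝ (Fin d) → Y → Y) (τ : X → EuclideanSpace ℝ (Fin d))
    (hG0 : G 0 = id) (hGadd : ∀ t s, G (t + s) = G t ∘ G s)
    (N : ℕ) (q : X × Y) :
    (skew f G τ)^[N] q = (f^[N] q.1, G (birkhoff f τ N q.1) q.2) := by
  induction N with
  | zero => simp [birkhoff, hG0]
  | succ n ih =>
      rw [Function.iterate_succ_apply', ih]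
      refine Prod.ext (Function.iterate_succ_apply' f n q.1).symm ?_
      show G (τ (f^[n] q.1)) (G (birkhoff f τ n q.1) q.2) = _
      rw [← Function.comp_apply (f := G (τ (f^[n] q.1))), ← hGadd]
      have : birkhoff f τ (n+1) q.1 = τ (f^[n] q.1) + birkhoff f τ n q.1 := by
        simp [birkhoff, Finset.sum_range_succ, add_comm]
      rw [this]

lemma integrable_of_bdd {α : Type*} [MeasurableSpace α] {m : Measure α} [IsFiniteMeasure m]
    {g : α → ℝ} (hg : Measurable g) {M : ℝ} (hM : ∀ x, |g x| ≤ M) : Integrable g m :=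
  (integrable_const M).mono' hg.aestronglyMeasurable (Eventually.of_forall fun x => by
    simpa using hM x)

set_option maxHeartbeats 1000000 in
/-- Theorem 4.1(a) of the paper: if `μ(τ) ≠ 0`, `τ` satisfies exponential large deviation
bounds, and `f` and `G` are exponentially mixing (for the given observables), then the
correlations of the product observables `Φᵢ(x,y) = Aᵢ(x)Bᵢ(y)` under `F` decay
exponentially. -/
theorem stmt_1
    {X Y : Type*} [MeasurableSpace X] [MeasurableSpace Y]
    (μ : Measure X) (ν : Measure Y)
    [IsProbabilityMeasure μ] [IsProbabilityMeasure ν]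
    {d : ℕ}
    (f : X → X) (hf : MeasurePreserving f μ μ)
    (G : EuclideanSpace ℝ (Fin d) → Y → Y)
    (hGmeas : Measurable fun q : EuclideanSpace ℝ (Fin d) × Y => G q.1 q.2)
    (hG0 : G 0 = id)
    (hGadd : ∀ t s, G (t + s) = G t ∘ G s)
    (hGpres : ∀ t, MeasurePreserving (G t) ν ν)
    (τ : X → EuclideanSpace ℝ (Fin d)) (hτmeas : Measurable τ)
    (hτbdd : ∃ M, ∀ x, ‖τ x‖ ≤ M)
    (hdrift : (∫ x, τ x ∂μ) ≠ 0)
    -- exponential large deviation bounds for τ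
    (hLD : ∀ ε : ℝ, 0 < ε → ∃ C : ℝ, 0 < C ∧ ∃ δ : ℝ, 0 < δ ∧ ∀ N : ℕ, 1 ≤ N →
      (μ {x | ε ≤ ‖(N : ℝ)⁻¹ • birkhoff f τ N x - ∫ x, τ x ∂μ‖}).toReal
        ≤ C * Real.exp (-δ * N))
    (A₁ A₂ : X → ℝ) (B₁ B₂ : Y → ℝ)
    (hA₁ : Measurable A₁) (hA₂ : Measurable A₂)
    (hB₁ : Measurable B₁) (hB₂ : Measurable B₂)
    (hA₁b : ∃ M, ∀ x, |A₁ x| ≤ M) (hA₂b : ∃ M, ∀ x, |A₂ x| ≤ M)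
    (hB₁b : ∃ M, ∀ y, |B₁ y| ≤ M) (hB₂b : ∃ M, ∀ y, |B₂ y| ≤ M)
    (Cf cf CG κ : ℝ) (hCf : 0 < Cf) (hcf : 0 < cf) (hCG : 0 < CG) (hκ : 0 < κ)
    -- exponential mixing of f for A₁, A₂
    (hfmix : ∀ N : ℕ, 1 ≤ N →
      |(∫ x, A₁ x * A₂ (f^[N] x) ∂μ) - (∫ x, A₁ x ∂μ) * ∫ x, A₂ x ∂μ|
        ≤ Cf * Real.exp (-cf * N))
    -- exponential mixing of G for B₁, B₂
    (hGmix : ∀ t : EuclideanSpace ℝ (Fin d),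
      |(∫ y, B₁ y * B₂ (G t y) ∂ν) - (∫ y, B₁ y ∂ν) * ∫ y, B₂ y ∂ν|
        ≤ CG * Real.exp (-κ * ‖t‖)) :
    ∃ C' : ℝ, 0 < C' ∧ ∃ δ' : ℝ, 0 < δ' ∧ ∀ N : ℕ, 1 ≤ N →
      |(∫ q, (A₁ q.1 * B₁ q.2) * (A₂ ((skew f G τ)^[N] q).1 * B₂ ((skew f G τ)^[N] q).2)
          ∂(μ.prod ν))
        - (∫ q, A₁ q.1 * B₁ q.2 ∂(μ.prod ν)) * ∫ q, A₂ q.1 * B₂ q.2 ∂(μ.prod ν)|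
        ≤ C' * Real.exp (-δ' * N) := by
  classical
  obtain ⟨MA₁, hMA₁⟩ := hA₁b
  obtain ⟨MA₂, hMA₂⟩ := hA₂b
  obtain ⟨MB₁, hMB₁⟩ := hB₁b
  obtain ⟨MB₂, hMB₂⟩ := hB₂b
  set K₁ := max MA₁ 1 with hK₁def
  set K₂ := max MA₂ 1 with hK₂def
  set L₁ := max MB₁ 1 with hL₁def
  set L₂ := max MB₂ 1 with hL₂def
  have hK₁pos : 0 < K₁ := lt_of_lt_of_le zero_lt_one (le_max_right _ _)
  have hK₂pos : 0 < K₂ := lt_of_lt_of_le zero_lt_one (le_max_right _ _)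
  have hL₁pos : 0 < L₁ := lt_of_lt_of_le zero_lt_one (le_max_right _ _)
  have hL₂pos : 0 < L₂ := lt_of_lt_of_le zero_lt_one (le_max_right _ _)
  have hA₁K : ∀ x, |A₁ x| ≤ K₁ := fun x => (hMA₁ x).trans (le_max_left _ _)
  have hA₂K : ∀ x, |A₂ x| ≤ K₂ := fun x => (hMA₂ x).trans (le_max_left _ _)
  have hB₁L : ∀ y, |B₁ y| ≤ L₁ := fun y => (hMB₁ y).trans (le_max_left _ _)
  have hB₂L : ∀ y, |B₂ y| ≤ L₂ := fun y => (hMB₂ y).trans (le_max_left _ _)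
  set T : EuclideanSpace ℝ (Fin d) := ∫ x, τ x ∂μ with hTdef
  set ε : ℝ := ‖T‖ / 2 with hεdef
  have hε : 0 < ε := half_pos (norm_pos_iff.mpr hdrift)
  obtain ⟨C, hC, δ, hδ, hLDb⟩ := hLD ε hε
  -- abbreviations
  set b1 : ℝ := ∫ y, B₁ y ∂ν with hb1def
  set b2 : ℝ := ∫ y, B₂ y ∂ν with hb2def
  set a1 : ℝ := ∫ x, A₁ x ∂μ with ha1def
  set a2 : ℝ := ∫ x, A₂ x ∂μ with ha2def
  set ρ : EuclideanSpace ℝ (Fin d) → ℝ := fun t => ∫ y, B₁ y * B₂ (G t y) ∂ν with hρdef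
  have hfm : Measurable f := hf.measurable
  have hbN : ∀ N, Measurable (birkhoff f τ N) := fun N =>
    Finset.measurable_sum _ fun n _ => hτmeas.comp (hfm.iterate n)
  have hρmeas : Measurable ρ :=
    (((hB₁.comp measurable_snd).mul
      (hB₂.comp hGmeas)).stronglyMeasurable.integral_prod_right').measurable
  have hρCG : ∀ t, |ρ t - b1 * b2| ≤ CG := fun t => by
    have h1 := hGmix t
    have h2 : Real.exp (-κ * ‖t‖) ≤ 1 := by
      rw [Real.exp_le_one_iff]
      have := norm_nonneg t
      nlinarith
    nlinarith
  have hρbdd : ∀ t, |ρ t| ≤ |b1 * b2| + CG := fun t => by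
    have h1 := hρCG t
    have h2 := abs_add_le (ρ t - b1 * b2) (b1 * b2)
    simp only [sub_add_cancel] at h2
    linarith
  -- |b1| ≤ L₁, |b2| ≤ L₂
  have hb1 : |b1| ≤ L₁ := by
    have := norm_integral_le_of_norm_le_const (μ := ν) (f := B₁) (C := L₁)
      (Eventually.of_forall fun y => by simpa using hB₁L y)
    simpa [Real.norm_eq_abs, measure_univ] using this
  have hb2 : |b2| ≤ L₂ := by
    have := norm_integral_le_of_norm_le_const (μ := ν) (f := B₂) (C := L₂)
      (Eventually.of_forall fun y => by simpa using hB₂L y)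
    simpa [Real.norm_eq_abs, measure_univ] using this
  -- Fubini: key reduction
  have key : ∀ N : ℕ,
      (∫ q, (A₁ q.1 * B₁ q.2) *
          (A₂ ((skew f G τ)^[N] q).1 * B₂ ((skew f G τ)^[N] q).2) ∂(μ.prod ν))
        = ∫ x, A₁ x * A₂ (f^[N] x) * ρ (birkhoff f τ N x) ∂μ := by
    intro N
    have hrw : ∀ q : X × Y,
        (A₁ q.1 * B₁ q.2) * (A₂ ((skew f G τ)^[N] q).1 * B₂ ((skew f G τ)^[N] q).2)
          = (A₁ q.1 * B₁ q.2) * (A₂ (f^[N] q.1) * B₂ (G (birkhoff f τ N q.1) q.2)) := by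
      intro q; rw [skew_iterate f G τ hG0 hGadd]
    rw [integral_congr_ae (Eventually.of_forall hrw)]
    have hmeas : Measurable (fun q : X × Y =>
        (A₁ q.1 * B₁ q.2) * (A₂ (f^[N] q.1) * B₂ (G (birkhoff f τ N q.1) q.2))) := by
      apply Measurable.mul
      · exact (hA₁.comp measurable_fst).mul (hB₁.comp measurable_snd)
      · exact ((hA₂.comp ((hfm.iterate N).comp measurable_fst)).mul
          (hB₂.comp (hGmeas.comp (((hbN N).comp measurable_fst).prodMk measurable_snd))))
    have hint : Integrable (fun q : X × Y =>
        (A₁ q.1 * B₁ q.2) * (A₂ (f^[N] q.1) * B₂ (G (birkhoff f τ N q.1) q.2)))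
        (μ.prod ν) := by
      refine integrable_of_bdd hmeas (M := K₁ * L₁ * (K₂ * L₂)) fun q => ?_
      have e1 := hA₁K q.1; have e2 := hB₁L q.2; have e3 := hA₂K (f^[N] q.1)
      have e4 := hB₂L (G (birkhoff f τ N q.1) q.2)
      calc |A₁ q.1 * B₁ q.2 * (A₂ (f^[N] q.1) * B₂ (G (birkhoff f τ N q.1) q.2))|
          = |A₁ q.1| * |B₁ q.2| * (|A₂ (f^[N] q.1)| * |B₂ (G (birkhoff f τ N q.1) q.2)|) := by
            rw [abs_mul, abs_mul, abs_mul]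
        _ ≤ K₁ * L₁ * (K₂ * L₂) := by
            gcongr <;> first | exact (abs_nonneg _).trans (by assumption) | assumption
    rw [integral_prod _ hint]
    refine integral_congr_ae (Eventually.of_forall fun x => ?_)
    have : (fun y => (A₁ x * B₁ y) * (A₂ (f^[N] x) * B₂ (G (birkhoff f τ N x) y)))
        = fun y => (A₁ x * A₂ (f^[N] x)) * (B₁ y * B₂ (G (birkhoff f τ N x) y)) := by
      funext y; ring
    show (∫ y, (A₁ x * B₁ y) * (A₂ (f^[N] x) * B₂ (G (birkhoff f τ N x) y)) ∂ν) = _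
    rw [this, integral_const_mul]
  have hΦ1 : (∫ q, A₁ q.1 * B₁ q.2 ∂(μ.prod ν)) = a1 * b1 := integral_prod_mul A₁ B₁
  have hΦ2 : (∫ q, A₂ q.1 * B₂ q.2 ∂(μ.prod ν)) = a2 * b2 := integral_prod_mul A₂ B₂
  -- constants
  refine ⟨K₁ * K₂ * CG * C + K₁ * K₂ * CG + L₁ * L₂ * Cf, by positivity,
    min δ (min (κ * ε) cf), lt_min hδ (lt_min (by positivity) hcf), fun N hN => ?_⟩
  set δ' : ℝ := min δ (min (κ * ε) cf) with hδ'def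
  have hNpos : (0:ℝ) < N := by exact_mod_cast hN
  -- integrability on X
  have hg2meas : Measurable (fun x => A₁ x * A₂ (f^[N] x)) := hA₁.mul (hA₂.comp (hfm.iterate N))
  have hg1meas : Measurable (fun x => A₁ x * A₂ (f^[N] x) * (ρ (birkhoff f τ N x) - b1 * b2)) :=
    hg2meas.mul ((hρmeas.comp (hbN N)).sub measurable_const)
  have habs3 : ∀ x, |A₁ x * A₂ (f^[N] x) * (ρ (birkhoff f τ N x) - b1 * b2)|
      ≤ K₁ * K₂ * |ρ (birkhoff f τ N x) - b1 * b2| := fun x => by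
    rw [abs_mul, abs_mul]
    have h1 := hA₁K x
    have h2 := hA₂K (f^[N] x)
    exact mul_le_mul_of_nonneg_right
      (mul_le_mul h1 h2 (abs_nonneg _) hK₁pos.le) (abs_nonneg _)
  have hg1int : Integrable (fun x => A₁ x * A₂ (f^[N] x) * (ρ (birkhoff f τ N x) - b1 * b2)) μ := by
    refine integrable_of_bdd hg1meas (M := K₁ * K₂ * CG) fun x => ?_
    refine (habs3 x).trans ?_
    exact mul_le_mul_of_nonneg_left (hρCG (birkhoff f τ N x)) (by positivity)
  have hg2int : Integrable (fun x => A₁ x * A₂ (f^[N] x)) μ :=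
    integrable_of_bdd hg2meas (M := K₁ * K₂) fun x => by
      rw [abs_mul]
      have := hA₁K x; have := hA₂K (f^[N] x)
      nlinarith [abs_nonneg (A₁ x), abs_nonneg (A₂ (f^[N] x))]
  -- decomposition of the main integral
  have hdecomp : (∫ x, A₁ x * A₂ (f^[N] x) * ρ (birkhoff f τ N x) ∂μ)
      = (∫ x, A₁ x * A₂ (f^[N] x) * (ρ (birkhoff f τ N x) - b1 * b2) ∂μ)
        + (b1 * b2) * ∫ x, A₁ x * A₂ (f^[N] x) ∂μ := by
    have hptw : ∀ x, A₁ x * A₂ (f^[N] x) * ρ (birkhoff f τ N x)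
        = A₁ x * A₂ (f^[N] x) * (ρ (birkhoff f τ N x) - b1 * b2)
          + (b1 * b2) * (A₁ x * A₂ (f^[N] x)) := fun x => by ring
    rw [integral_congr_ae (Eventually.of_forall hptw),
      integral_add hg1int (hg2int.const_mul _), integral_const_mul]
  -- the large deviation set
  set S : Set X := {x | ε ≤ ‖(N : ℝ)⁻¹ • birkhoff f τ N x - T‖} with hSdef
  have hS : MeasurableSet S := by
    apply measurableSet_le measurable_const
    exact (((hbN N).const_smul ((N:ℝ)⁻¹)).sub measurable_const).norm
  -- pointwise bound for g1
  have hpt : ∀ x, |A₁ x * A₂ (f^[N] x) * (ρ (birkhoff f τ N x) - b1 * b2)|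
      ≤ K₁ * K₂ * CG * S.indicator (fun _ => (1:ℝ)) x
        + K₁ * K₂ * (CG * Real.exp (-(κ * ε) * N)) := by
    intro x
    by_cases hx : x ∈ S
    · rw [Set.indicator_of_mem hx]
      have h1 : |A₁ x * A₂ (f^[N] x) * (ρ (birkhoff f τ N x) - b1 * b2)| ≤ K₁ * K₂ * CG :=
        (habs3 x).trans (mul_le_mul_of_nonneg_left (hρCG _) (by positivity))
      have h2 : (0:ℝ) ≤ K₁ * K₂ * (CG * Real.exp (-(κ * ε) * N)) := by positivity
      linarith
    · rw [Set.indicator_of_notMem hx, mul_zero, zero_add]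
      have hxlt : ‖(N : ℝ)⁻¹ • birkhoff f τ N x - T‖ < ε := not_le.mp hx
      have hnv : ε ≤ ‖(N : ℝ)⁻¹ • birkhoff f τ N x‖ := by
        have htri : ‖T‖ ≤ ‖(N : ℝ)⁻¹ • birkhoff f τ N x‖ + ‖(N : ℝ)⁻¹ • birkhoff f τ N x - T‖ := by
          simpa using norm_sub_le ((N : ℝ)⁻¹ • birkhoff f τ N x)
            ((N : ℝ)⁻¹ • birkhoff f τ N x - T)
        rw [hεdef] at hxlt ⊢
        linarith
      have hnorm : ε * N ≤ ‖birkhoff f τ N x‖ := by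
        have : ‖(N : ℝ)⁻¹ • birkhoff f τ N x‖ = ‖birkhoff f τ N x‖ / N := by
          rw [norm_smul, Real.norm_eq_abs, abs_of_pos (by positivity : (0:ℝ) < (N:ℝ)⁻¹)]
          field_simp
        rw [this] at hnv
        rw [le_div_iff₀ hNpos] at hnv
        linarith [hnv]
      have hexp : Real.exp (-κ * ‖birkhoff f τ N x‖) ≤ Real.exp (-(κ * ε) * N) := by
        apply Real.exp_le_exp.mpr
        nlinarith [mul_le_mul_of_nonneg_left hnorm hκ.le]
      refine (habs3 x).trans ?_
      have hb : |ρ (birkhoff f τ N x) - b1 * b2| ≤ CG * Real.exp (-(κ * ε) * N) :=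
        (hGmix _).trans (mul_le_mul_of_nonneg_left hexp hCG.le)
      exact mul_le_mul_of_nonneg_left hb (by positivity)
  -- integral bound for g1
  have hhint : Integrable (fun x => K₁ * K₂ * CG * S.indicator (fun _ => (1:ℝ)) x
      + K₁ * K₂ * (CG * Real.exp (-(κ * ε) * N))) μ :=
    (((integrable_const (1:ℝ)).indicator hS).const_mul _).add (integrable_const _)
  have hg1bound : |∫ x, A₁ x * A₂ (f^[N] x) * (ρ (birkhoff f τ N x) - b1 * b2) ∂μ|
      ≤ K₁ * K₂ * CG * (μ S).toReal + K₁ * K₂ * (CG * Real.exp (-(κ * ε) * N)) := by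
    have h1 : |∫ x, A₁ x * A₂ (f^[N] x) * (ρ (birkhoff f τ N x) - b1 * b2) ∂μ|
        ≤ ∫ x, |A₁ x * A₂ (f^[N] x) * (ρ (birkhoff f τ N x) - b1 * b2)| ∂μ := by
      simpa only [Real.norm_eq_abs] using
        norm_integral_le_integral_norm (μ := μ)
          (fun x => A₁ x * A₂ (f^[N] x) * (ρ (birkhoff f τ N x) - b1 * b2))
    have h2 : (∫ x, |A₁ x * A₂ (f^[N] x) * (ρ (birkhoff f τ N x) - b1 * b2)| ∂μ)
        ≤ ∫ x, (K₁ * K₂ * CG * S.indicator (fun _ => (1:ℝ)) x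
            + K₁ * K₂ * (CG * Real.exp (-(κ * ε) * N))) ∂μ :=
      integral_mono hg1int.abs hhint hpt
    have h3 : (∫ x, (K₁ * K₂ * CG * S.indicator (fun _ => (1:ℝ)) x
        + K₁ * K₂ * (CG * Real.exp (-(κ * ε) * N))) ∂μ)
        = K₁ * K₂ * CG * (μ S).toReal + K₁ * K₂ * (CG * Real.exp (-(κ * ε) * N)) := by
      rw [integral_add (((integrable_const (1:ℝ)).indicator hS).const_mul _) (integrable_const _),
        integral_const_mul, integral_indicator_const (1:ℝ) hS, integral_const]
      simp [measure_univ, measureReal_def]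
    linarith [h1, h2, h3.le, h3.ge]
  have hμS : (μ S).toReal ≤ C * Real.exp (-δ * N) := hLDb N hN
  -- second piece
  have hmix := hfmix N hN
  -- assemble
  rw [key N, hΦ1, hΦ2, hdecomp]
  have hsplit : |(∫ x, A₁ x * A₂ (f^[N] x) * (ρ (birkhoff f τ N x) - b1 * b2) ∂μ)
      + (b1 * b2) * (∫ x, A₁ x * A₂ (f^[N] x) ∂μ) - a1 * b1 * (a2 * b2)|
      ≤ |∫ x, A₁ x * A₂ (f^[N] x) * (ρ (birkhoff f τ N x) - b1 * b2) ∂μ|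
        + |b1 * b2| * |(∫ x, A₁ x * A₂ (f^[N] x) ∂μ) - a1 * a2| := by
    have : (∫ x, A₁ x * A₂ (f^[N] x) * (ρ (birkhoff f τ N x) - b1 * b2) ∂μ)
        + (b1 * b2) * (∫ x, A₁ x * A₂ (f^[N] x) ∂μ) - a1 * b1 * (a2 * b2)
        = (∫ x, A₁ x * A₂ (f^[N] x) * (ρ (birkhoff f τ N x) - b1 * b2) ∂μ)
          + (b1 * b2) * ((∫ x, A₁ x * A₂ (f^[N] x) ∂μ) - a1 * a2) := by ring
    rw [this]
    exact (abs_add_le _ _).trans (by rw [abs_mul])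
  refine hsplit.trans ?_
  -- exponential comparisons
  have hδ'N : ∀ α : ℝ, δ' ≤ α → Real.exp (-α * N) ≤ Real.exp (-δ' * N) := by
    intro α hα
    apply Real.exp_le_exp.mpr
    have := mul_le_mul_of_nonneg_right hα (Nat.cast_nonneg N : (0:ℝ) ≤ N)
    linarith
  have e1 := hδ'N δ (min_le_left _ _)
  have e2 := hδ'N (κ * ε) ((min_le_right _ _).trans (min_le_left _ _))
  have e3 := hδ'N cf ((min_le_right _ _).trans (min_le_right _ _))
  have hb12 : |b1 * b2| ≤ L₁ * L₂ := by
    rw [abs_mul]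
    exact mul_le_mul hb1 hb2 (abs_nonneg _) hL₁pos.le
  have hterm2 : |b1 * b2| * |(∫ x, A₁ x * A₂ (f^[N] x) ∂μ) - a1 * a2|
      ≤ L₁ * L₂ * (Cf * Real.exp (-cf * N)) := by
    exact mul_le_mul hb12 hmix (abs_nonneg _) (by positivity)
  have hμSbd : K₁ * K₂ * CG * (μ S).toReal ≤ K₁ * K₂ * CG * (C * Real.exp (-δ * N)) := by
    have : (0:ℝ) ≤ K₁ * K₂ * CG := by positivity
    nlinarith
  have hexp1 : K₁ * K₂ * CG * (C * Real.exp (-δ * N)) ≤ K₁ * K₂ * CG * C * Real.exp (-δ' * N) := by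
    have := mul_le_mul_of_nonneg_left e1 (show (0:ℝ) ≤ K₁ * K₂ * CG * C by positivity)
    linarith
  have hexp2 : K₁ * K₂ * (CG * Real.exp (-(κ * ε) * N)) ≤ K₁ * K₂ * CG * Real.exp (-δ' * N) := by
    have := mul_le_mul_of_nonneg_left e2 (show (0:ℝ) ≤ K₁ * K₂ * CG by positivity)
    linarith
  have hexp3 : L₁ * L₂ * (Cf * Real.exp (-cf * N)) ≤ L₁ * L₂ * Cf * Real.exp (-δ' * N) := by
    have := mul_le_mul_of_nonneg_left e3 (show (0:ℝ) ≤ L₁ * L₂ * Cf by positivity)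
    linarith
  linarith [hg1bound, hterm2, hμSbd, hexp1, hexp2, hexp3]
end

section
/- Assume μ(τ) ≠ 0 and that τ satisfies superpolynomial large deviation bounds: for each w > 0 and ε > 0 there exists C(ε, w) with μ(‖τ_N/N − μ(τ)‖ ≥ ε) ≤ C(ε, w) N^{−w} for all N ≥ 1. Let A₁, A₂ : X → ℝ and B₁, B₂ : Y → ℝ be bounded measurable functions such that for every m > 0 there exist constants C_m, C_m' with |μ(A₁ · (A₂ ∘ f^N)) − μ(A₁)μ(A₂)| ≤ C_m N^{−m} for all N ≥ 1, and |ν(B₁ · (B₂ ∘ G_t)) − ν(B₁)ν(B₂)| ≤ C_m' ‖t‖^{−m} for all t ∈ ℝ^d with ‖t‖ ≥ 1. Then, with Φ_i(x, y) = A_i(x)B_i(y), for every m > 0 there exists C'' with |∫ Φ₁ · (Φ₂ ∘ F^N) dζ − (∫ Φ₁ dζ)(∫ Φ₂ dζ)| ≤ C'' N^{−m} for all N ≥ 1. -/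
open MeasureTheory Filter Topology

lemma birkhoff_succ' {X : Type*} {d : ℕ} (f : X → X) (τ : X → EuclideanSpace ℝ (Fin d))
    (N : ℕ) (x : X) :
    birkhoff f τ (N + 1) x = birkhoff f τ N (f x) + τ x := by
  unfold birkhoff
  rw [Finset.sum_range_succ']
  simp [Function.iterate_succ_apply]

lemma integrable_of_bound' {α : Type*} [MeasurableSpace α] (μ : Measure α) [IsFiniteMeasure μ]
    {g : α → ℝ} (hmg : AEStronglyMeasurable g μ) (M : ℝ) (hb : ∀ a, |g a| ≤ M) :
    Integrable g μ :=
  (integrable_const M).mono' hmg (Eventually.of_forall (by simpa using hb))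

set_option maxHeartbeats 1000000 in
/-- Theorem 4.1(c) of the paper: nonzero drift, superpolynomial large deviation bounds and
rapid mixing of `f` and `G` (for the given observables) imply rapid mixing of the skew
product `F` for product observables. -/
theorem stmt_3
    {X Y : Type*} [MeasurableSpace X] [MeasurableSpace Y]
    (μ : Measure X) (ν : Measure Y)
    [IsProbabilityMeasure μ] [IsProbabilityMeasure ν]
    {d : ℕ}
    (f : X → X) (hf : MeasurePreserving f μ μ)
    (G : EuclideanSpace ℝ (Fin d) → Y → Y)
    (hGmeas : Measurable fun q : EuclideanSpace ℝ (Fin d) × Y => G q.1 q.2)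
    (hG0 : G 0 = id)
    (hGadd : ∀ t s, G (t + s) = G t ∘ G s)
    (hGpres : ∀ t, MeasurePreserving (G t) ν ν)
    (τ : X → EuclideanSpace ℝ (Fin d)) (hτmeas : Measurable τ)
    (hτbdd : ∃ M, ∀ x, ‖τ x‖ ≤ M)
    (hdrift : (∫ x, τ x ∂μ) ≠ 0)
    -- superpolynomial large deviation bounds for τ
    (hLD : ∀ w : ℝ, 0 < w → ∀ ε : ℝ, 0 < ε → ∃ C : ℝ, ∀ N : ℕ, 1 ≤ N →
      (μ {x | ε ≤ ‖(N : ℝ)⁻¹ • birkhoff f τ N x - ∫ x, τ x ∂μ‖}).toReal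
        ≤ C * (N : ℝ) ^ (-w))
    (A₁ A₂ : X → ℝ) (B₁ B₂ : Y → ℝ)
    (hA₁ : Measurable A₁) (hA₂ : Measurable A₂)
    (hB₁ : Measurable B₁) (hB₂ : Measurable B₂)
    (hA₁b : ∃ M, ∀ x, |A₁ x| ≤ M) (hA₂b : ∃ M, ∀ x, |A₂ x| ≤ M)
    (hB₁b : ∃ M, ∀ y, |B₁ y| ≤ M) (hB₂b : ∃ M, ∀ y, |B₂ y| ≤ M)
    -- rapid mixing of f for A₁, A₂
    (hfmix : ∀ m : ℝ, 0 < m → ∃ Cm : ℝ, ∀ N : ℕ, 1 ≤ N →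
      |(∫ x, A₁ x * A₂ (f^[N] x) ∂μ) - (∫ x, A₁ x ∂μ) * ∫ x, A₂ x ∂μ|
        ≤ Cm * (N : ℝ) ^ (-m))
    -- rapid mixing of G for B₁, B₂
    (hGmix : ∀ m : ℝ, 0 < m → ∃ Cm' : ℝ, ∀ t : EuclideanSpace ℝ (Fin d), 1 ≤ ‖t‖ →
      |(∫ y, B₁ y * B₂ (G t y) ∂ν) - (∫ y, B₁ y ∂ν) * ∫ y, B₂ y ∂ν|
        ≤ Cm' * ‖t‖ ^ (-m)) :
    ∀ m : ℝ, 0 < m → ∃ C'' : ℝ, ∀ N : ℕ, 1 ≤ N →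
      |(∫ q, (A₁ q.1 * B₁ q.2) * (A₂ ((skew f G τ)^[N] q).1 * B₂ ((skew f G τ)^[N] q).2)
          ∂(μ.prod ν))
        - (∫ q, A₁ q.1 * B₁ q.2 ∂(μ.prod ν)) * ∫ q, A₂ q.1 * B₂ q.2 ∂(μ.prod ν)|
        ≤ C'' * (N : ℝ) ^ (-m) := by
  intro m hm
  obtain ⟨a₁0, ha₁0⟩ := hA₁b
  obtain ⟨a₂0, ha₂0⟩ := hA₂b
  obtain ⟨b₁0, hb₁0⟩ := hB₁b
  obtain ⟨b₂0, hb₂0⟩ := hB₂b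
  set Ma₁ := max a₁0 0 with hMa₁def
  set Ma₂ := max a₂0 0 with hMa₂def
  set Mb₁ := max b₁0 0 with hMb₁def
  set Mb₂ := max b₂0 0 with hMb₂def
  have hMa₁ : ∀ x, |A₁ x| ≤ Ma₁ := fun x => (ha₁0 x).trans (le_max_left _ _)
  have hMa₂ : ∀ x, |A₂ x| ≤ Ma₂ := fun x => (ha₂0 x).trans (le_max_left _ _)
  have hMb₁ : ∀ y, |B₁ y| ≤ Mb₁ := fun y => (hb₁0 y).trans (le_max_left _ _)
  have hMb₂ : ∀ y, |B₂ y| ≤ Mb₂ := fun y => (hb₂0 y).trans (le_max_left _ _)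
  have hMa₁0 : 0 ≤ Ma₁ := le_max_right _ _
  have hMa₂0 : 0 ≤ Ma₂ := le_max_right _ _
  have hMb₁0 : 0 ≤ Mb₁ := le_max_right _ _
  have hMb₂0 : 0 ≤ Mb₂ := le_max_right _ _
  set c := ∫ x, τ x ∂μ with hcdef
  have hc : 0 < ‖c‖ := norm_pos_iff.mpr hdrift
  set ε := ‖c‖ / 2 with hεdef
  have hε : 0 < ε := by positivity
  obtain ⟨CLD0, hCLD0⟩ := hLD m hm ε hε
  obtain ⟨Cf0, hCf0⟩ := hfmix m hm
  obtain ⟨CG0, hCG0⟩ := hGmix m hm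
  set CLD := max CLD0 0 with hCLDdef
  set Cf := max Cf0 0 with hCfdef
  set CG := max CG0 0 with hCGdef
  have hCLD : ∀ N : ℕ, 1 ≤ N →
      (μ {x | ε ≤ ‖(N : ℝ)⁻¹ • birkhoff f τ N x - c‖}).toReal ≤ CLD * (N : ℝ) ^ (-m) :=
    fun N hN => (hCLD0 N hN).trans (mul_le_mul_of_nonneg_right (le_max_left _ _) (by positivity))
  have hCf : ∀ N : ℕ, 1 ≤ N →
      |(∫ x, A₁ x * A₂ (f^[N] x) ∂μ) - (∫ x, A₁ x ∂μ) * ∫ x, A₂ x ∂μ|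
        ≤ Cf * (N : ℝ) ^ (-m) :=
    fun N hN => (hCf0 N hN).trans (mul_le_mul_of_nonneg_right (le_max_left _ _) (by positivity))
  have hCG : ∀ t : EuclideanSpace ℝ (Fin d), 1 ≤ ‖t‖ →
      |(∫ y, B₁ y * B₂ (G t y) ∂ν) - (∫ y, B₁ y ∂ν) * ∫ y, B₂ y ∂ν|
        ≤ CG * ‖t‖ ^ (-m) := by
    intro t ht
    exact (hCG0 t ht).trans
      (mul_le_mul_of_nonneg_right (le_max_left _ _) (by positivity))
  have hCLDnn : 0 ≤ CLD := le_max_right _ _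
  have hCfnn : 0 ≤ Cf := le_max_right _ _
  have hCGnn : 0 ≤ CG := le_max_right _ _
  -- measurability of Birkhoff sums
  have hτN : ∀ N : ℕ, Measurable (birkhoff f τ N) := by
    intro N
    unfold birkhoff
    exact Finset.measurable_sum _ fun n _ => hτmeas.comp (hf.measurable.iterate n)
  -- the function b and its properties
  set b : EuclideanSpace ℝ (Fin d) → ℝ := fun t => ∫ y, B₁ y * B₂ (G t y) ∂ν with hbdef
  have hbm : Measurable b := by
    have hsm : StronglyMeasurable fun q : EuclideanSpace ℝ (Fin d) × Y =>
        B₁ q.2 * B₂ (G q.1 q.2) :=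
      ((hB₁.comp measurable_snd).mul (hB₂.comp hGmeas)).stronglyMeasurable
    exact hsm.integral_prod_right'.measurable
  have hbbd : ∀ t, |b t| ≤ Mb₁ * Mb₂ := by
    intro t
    rw [← Real.norm_eq_abs]
    calc ‖b t‖ ≤ (Mb₁ * Mb₂) * (ν Set.univ).toReal :=
          norm_integral_le_of_norm_le_const (Eventually.of_forall fun y => by
            rw [Real.norm_eq_abs, abs_mul]
            exact mul_le_mul (hMb₁ y) (hMb₂ _) (abs_nonneg _) hMb₁0)
      _ = Mb₁ * Mb₂ := by simp
  set cB := (∫ y, B₁ y ∂ν) * ∫ y, B₂ y ∂ν with hcBdef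
  have hIB₁ : |∫ y, B₁ y ∂ν| ≤ Mb₁ := by
    rw [← Real.norm_eq_abs]
    calc ‖∫ y, B₁ y ∂ν‖ ≤ Mb₁ * (ν Set.univ).toReal :=
          norm_integral_le_of_norm_le_const (Eventually.of_forall fun y => by
            rw [Real.norm_eq_abs]; exact hMb₁ y)
      _ = Mb₁ := by simp
  have hIB₂ : |∫ y, B₂ y ∂ν| ≤ Mb₂ := by
    rw [← Real.norm_eq_abs]
    calc ‖∫ y, B₂ y ∂ν‖ ≤ Mb₂ * (ν Set.univ).toReal :=
          norm_integral_le_of_norm_le_const (Eventually.of_forall fun y => by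
            rw [Real.norm_eq_abs]; exact hMb₂ y)
      _ = Mb₂ := by simp
  have hIA₁ : |∫ x, A₁ x ∂μ| ≤ Ma₁ := by
    rw [← Real.norm_eq_abs]
    calc ‖∫ x, A₁ x ∂μ‖ ≤ Ma₁ * (μ Set.univ).toReal :=
          norm_integral_le_of_norm_le_const (Eventually.of_forall fun x => by
            rw [Real.norm_eq_abs]; exact hMa₁ x)
      _ = Ma₁ := by simp
  have hIA₂ : |∫ x, A₂ x ∂μ| ≤ Ma₂ := by
    rw [← Real.norm_eq_abs]
    calc ‖∫ x, A₂ x ∂μ‖ ≤ Ma₂ * (μ Set.univ).toReal :=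
          norm_integral_le_of_norm_le_const (Eventually.of_forall fun x => by
            rw [Real.norm_eq_abs]; exact hMa₂ x)
      _ = Ma₂ := by simp
  have hcBbd : |cB| ≤ Mb₁ * Mb₂ := by
    rw [hcBdef, abs_mul]
    exact mul_le_mul hIB₁ hIB₂ (abs_nonneg _) hMb₁0
  -- Fubini reduction
  have key : ∀ N : ℕ,
      (∫ q, (A₁ q.1 * B₁ q.2) * (A₂ (f^[N] q.1) * B₂ (G (birkhoff f τ N q.1) q.2))
          ∂(μ.prod ν))
        = ∫ x, (A₁ x * A₂ (f^[N] x)) * b (birkhoff f τ N x) ∂μ := by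
    intro N
    have hGb : Measurable fun q : X × Y => B₂ (G (birkhoff f τ N q.1) q.2) :=
      hB₂.comp (hGmeas.comp (((hτN N).comp measurable_fst).prodMk measurable_snd))
    have hmeasq : Measurable fun q : X × Y =>
        (A₁ q.1 * A₂ (f^[N] q.1)) * (B₁ q.2 * B₂ (G (birkhoff f τ N q.1) q.2)) :=
      ((hA₁.comp measurable_fst).mul
        ((hA₂.comp (hf.measurable.iterate N)).comp measurable_fst)).mul
        ((hB₁.comp measurable_snd).mul hGb)
    have hint : Integrable (fun q : X × Y =>
        (A₁ q.1 * A₂ (f^[N] q.1)) * (B₁ q.2 * B₂ (G (birkhoff f τ N q.1) q.2))) (μ.prod ν) :=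
      integrable_of_bound' _ hmeasq.aestronglyMeasurable ((Ma₁ * Ma₂) * (Mb₁ * Mb₂))
        (fun q => by
          rw [abs_mul, abs_mul, abs_mul]
          exact mul_le_mul (mul_le_mul (hMa₁ _) (hMa₂ _) (abs_nonneg _) hMa₁0)
            (mul_le_mul (hMb₁ _) (hMb₂ _) (abs_nonneg _) hMb₁0)
            (by positivity) (by positivity))
    calc (∫ q, (A₁ q.1 * B₁ q.2) * (A₂ (f^[N] q.1) * B₂ (G (birkhoff f τ N q.1) q.2))
            ∂(μ.prod ν))
        = ∫ q, (A₁ q.1 * A₂ (f^[N] q.1)) * (B₁ q.2 * B₂ (G (birkhoff f τ N q.1) q.2))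
            ∂(μ.prod ν) :=
          integral_congr_ae (Eventually.of_forall fun q => by ring)
      _ = ∫ x, ∫ y, (A₁ x * A₂ (f^[N] x)) * (B₁ y * B₂ (G (birkhoff f τ N x) y)) ∂ν ∂μ :=
          integral_prod _ hint
      _ = ∫ x, (A₁ x * A₂ (f^[N] x)) * b (birkhoff f τ N x) ∂μ :=
          integral_congr_ae (Eventually.of_forall fun x => integral_const_mul _ _)
  -- trivial bound, valid for all N
  have htriv : ∀ N : ℕ,
      |(∫ x, (A₁ x * A₂ (f^[N] x)) * b (birkhoff f τ N x) ∂μ)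
        - ((∫ x, A₁ x ∂μ) * ∫ x, A₂ x ∂μ) * cB|
        ≤ 2 * ((Ma₁ * Ma₂) * (Mb₁ * Mb₂)) := by
    intro N
    have h1 : |∫ x, (A₁ x * A₂ (f^[N] x)) * b (birkhoff f τ N x) ∂μ|
        ≤ (Ma₁ * Ma₂) * (Mb₁ * Mb₂) := by
      rw [← Real.norm_eq_abs]
      calc ‖∫ x, (A₁ x * A₂ (f^[N] x)) * b (birkhoff f τ N x) ∂μ‖
          ≤ ((Ma₁ * Ma₂) * (Mb₁ * Mb₂)) * (μ Set.univ).toReal :=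
            norm_integral_le_of_norm_le_const (Eventually.of_forall fun x => by
              rw [Real.norm_eq_abs, abs_mul, abs_mul]
              exact mul_le_mul (mul_le_mul (hMa₁ _) (hMa₂ _) (abs_nonneg _) hMa₁0)
                (hbbd _) (abs_nonneg _) (by positivity))
        _ = (Ma₁ * Ma₂) * (Mb₁ * Mb₂) := by simp
    have h2 : |((∫ x, A₁ x ∂μ) * ∫ x, A₂ x ∂μ) * cB| ≤ (Ma₁ * Ma₂) * (Mb₁ * Mb₂) := by
      rw [abs_mul, abs_mul]
      exact mul_le_mul (mul_le_mul hIA₁ hIA₂ (abs_nonneg _) hMa₁0) hcBbd (abs_nonneg _)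
        (by positivity)
    calc |(∫ x, (A₁ x * A₂ (f^[N] x)) * b (birkhoff f τ N x) ∂μ)
          - ((∫ x, A₁ x ∂μ) * ∫ x, A₂ x ∂μ) * cB|
        ≤ |∫ x, (A₁ x * A₂ (f^[N] x)) * b (birkhoff f τ N x) ∂μ|
          + |((∫ x, A₁ x ∂μ) * ∫ x, A₂ x ∂μ) * cB| := abs_sub _ _
      _ ≤ 2 * ((Ma₁ * Ma₂) * (Mb₁ * Mb₂)) := by linarith
  -- main estimate for large N
  set N₀ : ℕ := max ⌈ε⁻¹⌉₊ 1 with hN₀def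
  set Cbig := (Ma₁ * Ma₂) * (2 * (Mb₁ * Mb₂)) * CLD + (Ma₁ * Ma₂) * (CG * ε ^ (-m))
      + (Mb₁ * Mb₂) * Cf with hCbigdef
  have hmain : ∀ N : ℕ, N₀ ≤ N →
      |(∫ x, (A₁ x * A₂ (f^[N] x)) * b (birkhoff f τ N x) ∂μ)
        - ((∫ x, A₁ x ∂μ) * ∫ x, A₂ x ∂μ) * cB|
        ≤ Cbig * (N : ℝ) ^ (-m) := by
    intro N hN
    have hN1 : 1 ≤ N := le_trans (le_max_right _ _) hN
    have hNpos : (0 : ℝ) < N := by exact_mod_cast hN1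
    have hNε : 1 ≤ (N : ℝ) * ε := by
      have h1 : ε⁻¹ ≤ (N : ℝ) := by
        rw [← Nat.ceil_le]
        exact le_trans (le_max_left _ _) hN
      calc (1 : ℝ) = ε⁻¹ * ε := by field_simp
        _ ≤ (N : ℝ) * ε := by gcongr
    have hhm : Measurable fun x => A₁ x * A₂ (f^[N] x) :=
      hA₁.mul (hA₂.comp (hf.measurable.iterate N))
    have hhbd : ∀ x, |A₁ x * A₂ (f^[N] x)| ≤ Ma₁ * Ma₂ := fun x => by
      rw [abs_mul]
      exact mul_le_mul (hMa₁ _) (hMa₂ _) (abs_nonneg _) hMa₁0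
    have hhint : Integrable (fun x => A₁ x * A₂ (f^[N] x)) μ :=
      integrable_of_bound' _ hhm.aestronglyMeasurable _ hhbd
    have hgm : Measurable fun x => (A₁ x * A₂ (f^[N] x)) * (b (birkhoff f τ N x) - cB) :=
      hhm.mul ((hbm.comp (hτN N)).sub measurable_const)
    have hgbd : ∀ x, |(A₁ x * A₂ (f^[N] x)) * (b (birkhoff f τ N x) - cB)|
        ≤ (Ma₁ * Ma₂) * (2 * (Mb₁ * Mb₂)) := fun x => by
      rw [abs_mul]
      refine mul_le_mul (hhbd x) ?_ (abs_nonneg _) (by positivity)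
      calc |b (birkhoff f τ N x) - cB| ≤ |b (birkhoff f τ N x)| + |cB| := abs_sub _ _
        _ ≤ 2 * (Mb₁ * Mb₂) := by have := hbbd (birkhoff f τ N x); linarith
    have hgint : Integrable
        (fun x => (A₁ x * A₂ (f^[N] x)) * (b (birkhoff f τ N x) - cB)) μ :=
      integrable_of_bound' _ hgm.aestronglyMeasurable _ hgbd
    -- decomposition of the difference
    have hdecomp :
        (∫ x, (A₁ x * A₂ (f^[N] x)) * b (birkhoff f τ N x) ∂μ)
          - ((∫ x, A₁ x ∂μ) * ∫ x, A₂ x ∂μ) * cB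
        = (∫ x, (A₁ x * A₂ (f^[N] x)) * (b (birkhoff f τ N x) - cB) ∂μ)
          + ((∫ x, A₁ x * A₂ (f^[N] x) ∂μ) - (∫ x, A₁ x ∂μ) * ∫ x, A₂ x ∂μ) * cB := by
      have h1 : (∫ x, (A₁ x * A₂ (f^[N] x)) * (b (birkhoff f τ N x) - cB) ∂μ)
          = (∫ x, (A₁ x * A₂ (f^[N] x)) * b (birkhoff f τ N x) ∂μ)
            - (∫ x, A₁ x * A₂ (f^[N] x) ∂μ) * cB := by
        have h2 : (∫ x, (A₁ x * A₂ (f^[N] x)) * (b (birkhoff f τ N x) - cB) ∂μ)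
            = ∫ x, ((A₁ x * A₂ (f^[N] x)) * b (birkhoff f τ N x)
                - (A₁ x * A₂ (f^[N] x)) * cB) ∂μ :=
          integral_congr_ae (Eventually.of_forall fun x => by ring)
        rw [h2, integral_sub, integral_mul_const]
        · exact integrable_of_bound' _
            (hhm.mul (hbm.comp (hτN N))).aestronglyMeasurable ((Ma₁ * Ma₂) * (Mb₁ * Mb₂))
            (fun x => by
              rw [abs_mul]
              exact mul_le_mul (hhbd x) (hbbd _) (abs_nonneg _) (by positivity))
        · exact hhint.mul_const cB
      rw [h1]; ring
    rw [hdecomp]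
    -- set decomposition
    set s := {x | ε ≤ ‖(N : ℝ)⁻¹ • birkhoff f τ N x - c‖} with hsdef
    have hsm : MeasurableSet s :=
      measurableSet_le measurable_const
        ((((hτN N).const_smul ((N : ℝ)⁻¹)).sub measurable_const).norm)
    have hsplit : (∫ x, (A₁ x * A₂ (f^[N] x)) * (b (birkhoff f τ N x) - cB) ∂μ)
        = (∫ x in s, (A₁ x * A₂ (f^[N] x)) * (b (birkhoff f τ N x) - cB) ∂μ)
          + ∫ x in sᶜ, (A₁ x * A₂ (f^[N] x)) * (b (birkhoff f τ N x) - cB) ∂μ :=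
      (integral_add_compl hsm hgint).symm
    -- bad set bound
    have hbad : |∫ x in s, (A₁ x * A₂ (f^[N] x)) * (b (birkhoff f τ N x) - cB) ∂μ|
        ≤ (Ma₁ * Ma₂) * (2 * (Mb₁ * Mb₂)) * (CLD * (N : ℝ) ^ (-m)) := by
      rw [← Real.norm_eq_abs]
      calc ‖∫ x in s, (A₁ x * A₂ (f^[N] x)) * (b (birkhoff f τ N x) - cB) ∂μ‖
          ≤ (Ma₁ * Ma₂) * (2 * (Mb₁ * Mb₂)) * (μ s).toReal :=
            norm_setIntegral_le_of_norm_le_const (measure_lt_top _ _)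
              (fun x _ => by rw [Real.norm_eq_abs]; exact hgbd x)
        _ ≤ (Ma₁ * Ma₂) * (2 * (Mb₁ * Mb₂)) * (CLD * (N : ℝ) ^ (-m)) := by
            refine mul_le_mul_of_nonneg_left ?_ (by positivity)
            exact hCLD N hN1
    -- good set bound
    have hgood : |∫ x in sᶜ, (A₁ x * A₂ (f^[N] x)) * (b (birkhoff f τ N x) - cB) ∂μ|
        ≤ (Ma₁ * Ma₂) * (CG * ε ^ (-m)) * (N : ℝ) ^ (-m) := by
      have hptwise : ∀ x ∈ sᶜ,
          ‖(A₁ x * A₂ (f^[N] x)) * (b (birkhoff f τ N x) - cB)‖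
            ≤ (Ma₁ * Ma₂) * (CG * ε ^ (-m)) * (N : ℝ) ^ (-m) := by
        intro x hx
        have hx' : ‖(N : ℝ)⁻¹ • birkhoff f τ N x - c‖ < ε := by
          simpa [hsdef, not_le] using hx
        have hnorm1 : ε ≤ ‖(N : ℝ)⁻¹ • birkhoff f τ N x‖ := by
          have h2 : ‖c‖ - ‖(N : ℝ)⁻¹ • birkhoff f τ N x‖
              ≤ ‖(N : ℝ)⁻¹ • birkhoff f τ N x - c‖ := by
            rw [← norm_sub_rev]
            exact norm_sub_norm_le c ((N : ℝ)⁻¹ • birkhoff f τ N x)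
          have h3 : ‖c‖ = 2 * ε := by rw [hεdef]; ring
          linarith
        have hnormsmul : ‖(N : ℝ)⁻¹ • birkhoff f τ N x‖
            = (N : ℝ)⁻¹ * ‖birkhoff f τ N x‖ := by
          rw [norm_smul, Real.norm_eq_abs, abs_of_pos (by positivity)]
        have hnorm2 : (N : ℝ) * ε ≤ ‖birkhoff f τ N x‖ := by
          rw [hnormsmul] at hnorm1
          calc (N : ℝ) * ε ≤ (N : ℝ) * ((N : ℝ)⁻¹ * ‖birkhoff f τ N x‖) := by gcongr
            _ = ‖birkhoff f τ N x‖ := by field_simp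
        have ht1 : 1 ≤ ‖birkhoff f τ N x‖ := hNε.trans hnorm2
        have hmix := hCG (birkhoff f τ N x) ht1
        have hrpow : ‖birkhoff f τ N x‖ ^ (-m) ≤ ((N : ℝ) * ε) ^ (-m) :=
          Real.rpow_le_rpow_of_nonpos (by positivity) hnorm2 (neg_nonpos.mpr hm.le)
        have hmul : ((N : ℝ) * ε) ^ (-m) = (N : ℝ) ^ (-m) * ε ^ (-m) :=
          Real.mul_rpow hNpos.le hε.le
        rw [Real.norm_eq_abs, abs_mul]
        calc |A₁ x * A₂ (f^[N] x)| * |b (birkhoff f τ N x) - cB|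
            ≤ (Ma₁ * Ma₂) * (CG * ((N : ℝ) ^ (-m) * ε ^ (-m))) := by
              refine mul_le_mul (hhbd x) ?_ (abs_nonneg _) (by positivity)
              calc |b (birkhoff f τ N x) - cB| ≤ CG * ‖birkhoff f τ N x‖ ^ (-m) := hmix
                _ ≤ CG * ((N : ℝ) * ε) ^ (-m) := by gcongr
                _ = CG * ((N : ℝ) ^ (-m) * ε ^ (-m)) := by rw [hmul]
          _ = (Ma₁ * Ma₂) * (CG * ε ^ (-m)) * (N : ℝ) ^ (-m) := by ring
      rw [← Real.norm_eq_abs]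
      calc ‖∫ x in sᶜ, (A₁ x * A₂ (f^[N] x)) * (b (birkhoff f τ N x) - cB) ∂μ‖
          ≤ (Ma₁ * Ma₂) * (CG * ε ^ (-m)) * (N : ℝ) ^ (-m) * (μ sᶜ).toReal :=
            norm_setIntegral_le_of_norm_le_const (measure_lt_top _ _) hptwise
        _ ≤ (Ma₁ * Ma₂) * (CG * ε ^ (-m)) * (N : ℝ) ^ (-m) * 1 := by
            refine mul_le_mul_of_nonneg_left ?_ (by positivity)
            rw [← ENNReal.toReal_one]
            exact ENNReal.toReal_mono ENNReal.one_ne_top prob_le_one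
        _ = (Ma₁ * Ma₂) * (CG * ε ^ (-m)) * (N : ℝ) ^ (-m) := by ring
    -- mixing of f bound
    have hfterm : |((∫ x, A₁ x * A₂ (f^[N] x) ∂μ) - (∫ x, A₁ x ∂μ) * ∫ x, A₂ x ∂μ) * cB|
        ≤ (Mb₁ * Mb₂) * Cf * (N : ℝ) ^ (-m) := by
      rw [abs_mul]
      calc |(∫ x, A₁ x * A₂ (f^[N] x) ∂μ) - (∫ x, A₁ x ∂μ) * ∫ x, A₂ x ∂μ| * |cB|
          ≤ (Cf * (N : ℝ) ^ (-m)) * (Mb₁ * Mb₂) :=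
            mul_le_mul (hCf N hN1) hcBbd (abs_nonneg _) (by positivity)
        _ = (Mb₁ * Mb₂) * Cf * (N : ℝ) ^ (-m) := by ring
    calc |(∫ x, (A₁ x * A₂ (f^[N] x)) * (b (birkhoff f τ N x) - cB) ∂μ)
          + ((∫ x, A₁ x * A₂ (f^[N] x) ∂μ) - (∫ x, A₁ x ∂μ) * ∫ x, A₂ x ∂μ) * cB|
        ≤ |∫ x, (A₁ x * A₂ (f^[N] x)) * (b (birkhoff f τ N x) - cB) ∂μ|
          + |((∫ x, A₁ x * A₂ (f^[N] x) ∂μ) - (∫ x, A₁ x ∂μ) * ∫ x, A₂ x ∂μ) * cB| :=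
          abs_add_le _ _
      _ ≤ (|∫ x in s, (A₁ x * A₂ (f^[N] x)) * (b (birkhoff f τ N x) - cB) ∂μ|
            + |∫ x in sᶜ, (A₁ x * A₂ (f^[N] x)) * (b (birkhoff f τ N x) - cB) ∂μ|)
          + |((∫ x, A₁ x * A₂ (f^[N] x) ∂μ) - (∫ x, A₁ x ∂μ) * ∫ x, A₂ x ∂μ) * cB| := by
          gcongr
          rw [hsplit]
          exact abs_add_le _ _
      _ ≤ ((Ma₁ * Ma₂) * (2 * (Mb₁ * Mb₂)) * (CLD * (N : ℝ) ^ (-m))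
            + (Ma₁ * Ma₂) * (CG * ε ^ (-m)) * (N : ℝ) ^ (-m))
          + (Mb₁ * Mb₂) * Cf * (N : ℝ) ^ (-m) := by
          exact add_le_add (add_le_add hbad hgood) hfterm
      _ = Cbig * (N : ℝ) ^ (-m) := by rw [hCbigdef]; ring
  -- assemble
  set D := 2 * ((Ma₁ * Ma₂) * (Mb₁ * Mb₂)) with hDdef
  refine ⟨max Cbig (D * (N₀ : ℝ) ^ (m : ℝ)), ?_⟩
  intro N hN1
  have hNpos : (0 : ℝ) < N := by exact_mod_cast hN1
  have hrw : |(∫ q, (A₁ q.1 * B₁ q.2) * (A₂ ((skew f G τ)^[N] q).1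
        * B₂ ((skew f G τ)^[N] q).2) ∂(μ.prod ν))
      - (∫ q, A₁ q.1 * B₁ q.2 ∂(μ.prod ν)) * ∫ q, A₂ q.1 * B₂ q.2 ∂(μ.prod ν)|
      = |(∫ x, (A₁ x * A₂ (f^[N] x)) * b (birkhoff f τ N x) ∂μ)
        - ((∫ x, A₁ x ∂μ) * ∫ x, A₂ x ∂μ) * cB| := by
    have e1 : (∫ q, (A₁ q.1 * B₁ q.2) * (A₂ ((skew f G τ)^[N] q).1
          * B₂ ((skew f G τ)^[N] q).2) ∂(μ.prod ν))
        = ∫ q, (A₁ q.1 * B₁ q.2) * (A₂ (f^[N] q.1) * B₂ (G (birkhoff f τ N q.1) q.2))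
            ∂(μ.prod ν) := by
      refine integral_congr_ae (Eventually.of_forall fun q => ?_)
      simp only [skew_iterate f G τ hG0 hGadd]
    have e2 : (∫ q, A₁ q.1 * B₁ q.2 ∂(μ.prod ν)) = (∫ x, A₁ x ∂μ) * ∫ y, B₁ y ∂ν :=
      integral_prod_mul A₁ B₁
    have e3 : (∫ q, A₂ q.1 * B₂ q.2 ∂(μ.prod ν)) = (∫ x, A₂ x ∂μ) * ∫ y, B₂ y ∂ν :=
      integral_prod_mul A₂ B₂
    rw [e1, key N, e2, e3]
    congr 1
    rw [hcBdef]
    ring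
  rw [hrw]
  rcases le_or_gt N₀ N with hcase | hcase
  · calc |(∫ x, (A₁ x * A₂ (f^[N] x)) * b (birkhoff f τ N x) ∂μ)
          - ((∫ x, A₁ x ∂μ) * ∫ x, A₂ x ∂μ) * cB| ≤ Cbig * (N : ℝ) ^ (-m) :=
          hmain N hcase
      _ ≤ max Cbig (D * (N₀ : ℝ) ^ (m : ℝ)) * (N : ℝ) ^ (-m) := by
          gcongr
          exact le_max_left _ _
  · have hN₀pos : (0 : ℝ) < (N₀ : ℝ) := by
      have : 1 ≤ N₀ := le_max_right _ _
      exact_mod_cast lt_of_lt_of_le zero_lt_one (by exact_mod_cast this)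
    have hle : (N : ℝ) ≤ (N₀ : ℝ) := by exact_mod_cast hcase.le
    have hmono : (N₀ : ℝ) ^ (-m) ≤ (N : ℝ) ^ (-m) :=
      Real.rpow_le_rpow_of_nonpos hNpos hle (neg_nonpos.mpr hm.le)
    calc |(∫ x, (A₁ x * A₂ (f^[N] x)) * b (birkhoff f τ N x) ∂μ)
          - ((∫ x, A₁ x ∂μ) * ∫ x, A₂ x ∂μ) * cB| ≤ D := htriv N
      _ = D * ((N₀ : ℝ) ^ (m : ℝ) * (N₀ : ℝ) ^ (-m)) := by
          rw [← Real.rpow_add hN₀pos, add_neg_cancel, Real.rpow_zero, mul_one]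
      _ = (D * (N₀ : ℝ) ^ (m : ℝ)) * (N₀ : ℝ) ^ (-m) := by ring
      _ ≤ max Cbig (D * (N₀ : ℝ) ^ (m : ℝ)) * (N : ℝ) ^ (-m) := by
          have hD0 : 0 ≤ D * (N₀ : ℝ) ^ (m : ℝ) := by positivity
          exact mul_le_mul (le_max_right _ _) hmono (by positivity)
            (le_trans hD0 (le_max_right _ _))
end

section
/- Let d ≥ 1 be an integer and (L_n)_{n≥0} positive reals with L_0 = 1 and Σ_{n≥1} L_n^{−d} < ∞. Let m ≥ 2 and let Q be a social partition of {1, …, m} with r atoms. For integers 0 ≤ n₁ ≤ … ≤ n_m set κ_Q⁺(n₁, …, n_m) = ∏_{j forward fixed in Q} L_{n_j − n_{j−1}} (with n_0 = 0). Then: (a) there is C such that for every N ≥ 1, Σ_{0 ≤ n₁ ≤ … ≤ n_m ≤ N} κ_Q⁺(n₁, …, n_m)^{−d} ≤ C N^r; (b) if Q is not a pairing (i.e., some atom of Q has more than two elements), then this sum is at most C N^{(m−1)/2}. -/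
set_option maxHeartbeats 1000000


open Filter
open scoped Classical

noncomputable section

/-- `Q` is a partition of `Fin m` (as a finite set of finite sets). -/
def IsPartitionFin {m : ℕ} (Q : Finset (Finset (Fin m))) : Prop :=
  (∀ A ∈ Q, A.Nonempty) ∧ ∀ j : Fin m, ∃! A, A ∈ Q ∧ j ∈ A

/-- A partition is social if every atom has at least two elements. -/
def SocialFin {m : ℕ} (Q : Finset (Finset (Fin m))) : Prop :=
  IsPartitionFin Q ∧ ∀ A ∈ Q, 2 ≤ A.card

/-- `j` is forward fixed in `Q` if it is not the smallest index of its atom. -/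
def ForwardFixedFin {m : ℕ} (Q : Finset (Finset (Fin m))) (j : Fin m) : Prop :=
  ∃ A ∈ Q, j ∈ A ∧ ∃ i ∈ A, i < j

/-- The value `n_{j-1}`, with the convention `n_0 = 0` before the first index. -/
def prevVal {m : ℕ} (n : Fin m → ℕ) (j : Fin m) : ℕ :=
  if j.val = 0 then 0
  else n ⟨j.val - 1, lt_of_le_of_lt (Nat.sub_le _ _) j.isLt⟩

/-- `κ_Q⁺(n₁,…,n_m) = ∏_{j forward fixed in Q} L_{n_j − n_{j−1}}`. -/
def kappaPlusFin {m : ℕ} (L : ℕ → ℝ) (Q : Finset (Finset (Fin m))) (n : Fin m → ℕ) : ℝ :=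
  ∏ j : Fin m, if ForwardFixedFin Q j then L (n j - prevVal n j) else 1

/-- The factor attached to index `j` after the change of variables to gaps. -/
def ffac (d : ℕ) (L : ℕ → ℝ) {m : ℕ} (Q : Finset (Finset (Fin m))) (j : Fin m) (g : ℕ) : ℝ :=
  if ForwardFixedFin Q j then 1 / L g ^ d else 1

/-- The gap map `n ↦ (n_j - n_{j-1})_j`. -/
def gapsMap {m : ℕ} (n : Fin m → ℕ) (j : Fin m) : ℕ := n j - prevVal n j

lemma atom_eq {m : ℕ} {Q : Finset (Finset (Fin m))} (hQ : IsPartitionFin Q)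
    {A B : Finset (Fin m)} {j : Fin m}
    (hA : A ∈ Q) (hjA : j ∈ A) (hB : B ∈ Q) (hjB : j ∈ B) : A = B := by
  obtain ⟨C, _, hu⟩ := hQ.2 j
  rw [hu A ⟨hA, hjA⟩, hu B ⟨hB, hjB⟩]

lemma card_notFF {m : ℕ} {Q : Finset (Finset (Fin m))} (hQ : IsPartitionFin Q) :
    (Finset.univ.filter fun j => ¬ ForwardFixedFin Q j).card = Q.card := by
  symm
  apply Finset.card_bij (fun A hA => A.min' (hQ.1 A hA))
  · intro A hA
    simp only [Finset.mem_filter, Finset.mem_univ, true_and]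
    rintro ⟨B, hB, hmB, i, hiB, hilt⟩
    have hAB : A = B := atom_eq hQ hA (A.min'_mem (hQ.1 A hA)) hB hmB
    subst hAB
    exact absurd (A.min'_le i hiB) (not_le.mpr hilt)
  · intro A hA B hB h
    have hjB : A.min' (hQ.1 A hA) ∈ B := by rw [h]; exact B.min'_mem _
    exact atom_eq hQ hA (A.min'_mem _) hB hjB
  · intro j hj
    simp only [Finset.mem_filter, Finset.mem_univ, true_and] at hj
    obtain ⟨A, ⟨hA, hjA⟩, -⟩ := hQ.2 j
    refine ⟨A, hA, ?_⟩
    have h1 : A.min' (hQ.1 A hA) ≤ j := A.min'_le j hjA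
    rcases lt_or_eq_of_le h1 with h | h
    · exact absurd ⟨A, hA, hjA, A.min' _, A.min'_mem _, h⟩ hj
    · exact h

lemma sum_card_atoms {m : ℕ} {Q : Finset (Finset (Fin m))} (hQ : IsPartitionFin Q) :
    ∑ A ∈ Q, A.card = m := by
  have hdisj : ∀ A ∈ Q, ∀ B ∈ Q, A ≠ B → Disjoint A B := by
    intro A hA B hB hne
    rw [Finset.disjoint_left]
    intro j hjA hjB
    exact hne (atom_eq hQ hA hjA hB hjB)
  have huniv : Q.biUnion id = Finset.univ := by
    ext j
    simp only [Finset.mem_biUnion, id, Finset.mem_univ, iff_true]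
    obtain ⟨A, ⟨hA, hjA⟩, -⟩ := hQ.2 j
    exact ⟨A, hA, hjA⟩
  calc ∑ A ∈ Q, A.card = (Q.biUnion id).card := (Finset.card_biUnion hdisj).symm
    _ = m := by rw [huniv]; simp

/-- Lemma 5.3 of the paper: (a) the sum of `κ_Q⁺^{-d}` over monotone tuples
`0 ≤ n₁ ≤ … ≤ n_m ≤ N` is `O(N^r)` where `r` is the number of atoms of the social
partition `Q`; (b) if `Q` is not a pairing, the sum is `O(N^{(m-1)/2})`. -/
theorem stmt_11
    (d : ℕ) (hd : 1 ≤ d) (L : ℕ → ℝ) (hLpos : ∀ n, 0 < L n) (hL0 : L 0 = 1)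
    (hLsum : Summable fun n : ℕ => 1 / L (n + 1) ^ d)
    (m : ℕ) (hm : 2 ≤ m)
    (Q : Finset (Finset (Fin m))) (hQ : SocialFin Q) :
    (∃ C : ℝ, ∀ N : ℕ, 1 ≤ N →
      ∑ n ∈ (Fintype.piFinset fun _ : Fin m => Finset.range (N + 1)).filter
          (fun n => ∀ i j : Fin m, i ≤ j → n i ≤ n j),
        1 / kappaPlusFin L Q n ^ d ≤ C * (N : ℝ) ^ (Q.card)) ∧
    ((¬ ∀ A ∈ Q, A.card = 2) → ∃ C : ℝ, ∀ N : ℕ, 1 ≤ N →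
      ∑ n ∈ (Fintype.piFinset fun _ : Fin m => Finset.range (N + 1)).filter
          (fun n => ∀ i j : Fin m, i ≤ j → n i ≤ n j),
        1 / kappaPlusFin L Q n ^ d ≤ C * (N : ℝ) ^ (((m : ℝ) - 1) / 2)) := by
  set S : ℝ := 1 + ∑' n : ℕ, 1 / L (n + 1) ^ d with hSdef
  have htsum_nonneg : 0 ≤ ∑' n : ℕ, 1 / L (n + 1) ^ d :=
    tsum_nonneg fun n => div_nonneg zero_le_one (pow_nonneg (hLpos _).le d)
  have hS1 : (1 : ℝ) ≤ S := le_add_of_nonneg_right htsum_nonneg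
  set C : ℝ := S ^ m * 2 ^ m with hCdef
  have hC0 : 0 ≤ C :=
    mul_nonneg (pow_nonneg (zero_le_one.trans hS1) m) (pow_nonneg (by norm_num) m)
  have hprev : ∀ n : Fin m → ℕ, (∀ i j : Fin m, i ≤ j → n i ≤ n j) →
      ∀ j, prevVal n j ≤ n j := by
    intro n hmon j
    unfold prevVal
    split
    · exact Nat.zero_le _
    · exact hmon _ j (by rw [Fin.le_def]; exact Nat.sub_le _ _)
  have main : ∀ N : ℕ, 1 ≤ N →
      ∑ n ∈ (Fintype.piFinset fun _ : Fin m => Finset.range (N + 1)).filter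
          (fun n => ∀ i j : Fin m, i ≤ j → n i ≤ n j),
        1 / kappaPlusFin L Q n ^ d ≤ C * (N : ℝ) ^ (Q.card) := by
    intro N hN
    have hN1 : (1 : ℝ) ≤ (N : ℝ) := by exact_mod_cast hN
    set T := (Fintype.piFinset fun _ : Fin m => Finset.range (N + 1)).filter
        (fun n => ∀ i j : Fin m, i ≤ j → n i ≤ n j) with hTdef
    have hf0 : ∀ j g, 0 ≤ ffac d L Q j g := by
      intro j g
      unfold ffac
      split
      · exact div_nonneg zero_le_one (pow_nonneg (hLpos _).le d)
      · exact zero_le_one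
    -- Step 1 : rewrite each term through the gap map
    have hterm : ∀ n : Fin m → ℕ,
        1 / kappaPlusFin L Q n ^ d = ∏ j, ffac d L Q j (gapsMap n j) := by
      intro n
      rw [kappaPlusFin, ← Finset.prod_pow, one_div, ← Finset.prod_inv_distrib]
      refine Finset.prod_congr rfl fun j _ => ?_
      unfold ffac gapsMap
      split <;> simp
    -- Step 2 : injectivity of the gap map on monotone tuples
    have hinj : ∀ x ∈ T, ∀ y ∈ T, gapsMap x = gapsMap y → x = y := by
      intro x hx y hy h
      rw [hTdef, Finset.mem_filter] at hx hy
      have key : ∀ k (hk : k < m), x ⟨k, hk⟩ = y ⟨k, hk⟩ := by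
        intro k
        induction k with
        | zero =>
          intro hk
          have e := congrFun h (⟨0, hk⟩ : Fin m)
          simpa [gapsMap, prevVal] using e
        | succ k ih =>
          intro hk
          have hk' : k < m := Nat.lt_of_succ_lt hk
          have e := congrFun h (⟨k + 1, hk⟩ : Fin m)
          simp only [gapsMap] at e
          have hpx : prevVal x ⟨k + 1, hk⟩ = x ⟨k, hk'⟩ := by simp [prevVal]
          have hpy : prevVal y ⟨k + 1, hk⟩ = y ⟨k, hk'⟩ := by simp [prevVal]
          have h1 := hprev x hx.2 ⟨k + 1, hk⟩
          have h2 := hprev y hy.2 ⟨k + 1, hk⟩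
          rw [hpx] at e h1
          rw [hpy] at e h2
          rw [ih hk'] at e h1
          omega
      funext j
      exact key j.1 j.2
    -- Step 3 : the image of the gap map lies inside the box
    have hsub : T.image gapsMap ⊆ Fintype.piFinset fun _ : Fin m => Finset.range (N + 1) := by
      intro g hg
      rw [Finset.mem_image] at hg
      obtain ⟨n, hn, rfl⟩ := hg
      rw [hTdef, Finset.mem_filter, Fintype.mem_piFinset] at hn
      rw [Fintype.mem_piFinset]
      intro j
      have := hn.1 j
      rw [Finset.mem_range] at this ⊢
      exact lt_of_le_of_lt (Nat.sub_le _ _) this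
    -- Step 4 : bound on the one-dimensional sums
    have hfac : ∀ j : Fin m,
        ∑ g ∈ Finset.range (N + 1), ffac d L Q j g
          ≤ if ForwardFixedFin Q j then S else 2 * (N : ℝ) := by
      intro j
      by_cases hj : ForwardFixedFin Q j
      · simp only [hj, if_true, ffac]
        rw [Finset.sum_range_succ']
        have h0 : 1 / L 0 ^ d = 1 := by rw [hL0, one_pow, div_one]
        rw [h0]
        have hle : ∑ i ∈ Finset.range N, 1 / L (i + 1) ^ d
            ≤ ∑' n : ℕ, 1 / L (n + 1) ^ d :=
          Summable.sum_le_tsum (Finset.range N)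
            (fun i _ => div_nonneg zero_le_one (pow_nonneg (hLpos _).le d)) hLsum
        rw [hSdef]
        linarith
      · simp only [hj, if_false, ffac]
        rw [Finset.sum_const, Finset.card_range, nsmul_eq_mul]
        push_cast
        linarith
    -- Put everything together
    calc ∑ n ∈ T, 1 / kappaPlusFin L Q n ^ d
        = ∑ n ∈ T, ∏ j, ffac d L Q j (gapsMap n j) :=
          Finset.sum_congr rfl fun n _ => hterm n
      _ = ∑ g ∈ T.image gapsMap, ∏ j, ffac d L Q j (g j) :=
          (Finset.sum_image (f := fun g : Fin m → ℕ => ∏ j, ffac d L Q j (g j)) hinj).symm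
      _ ≤ ∑ g ∈ Fintype.piFinset fun _ : Fin m => Finset.range (N + 1),
            ∏ j, ffac d L Q j (g j) :=
          Finset.sum_le_sum_of_subset_of_nonneg hsub
            (fun g _ _ => Finset.prod_nonneg fun j _ => hf0 j (g j))
      _ = ∏ j : Fin m, ∑ g ∈ Finset.range (N + 1), ffac d L Q j g :=
          (Finset.prod_univ_sum _ _).symm
      _ ≤ ∏ j : Fin m, (if ForwardFixedFin Q j then S else 2 * (N : ℝ)) :=
          Finset.prod_le_prod
            (fun j _ => Finset.sum_nonneg fun g _ => hf0 j g)
            (fun j _ => hfac j)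
      _ = S ^ (Finset.univ.filter fun j => ForwardFixedFin Q j).card
            * (2 * (N : ℝ)) ^ Q.card := by
          rw [Finset.prod_ite, Finset.prod_const, Finset.prod_const, card_notFF hQ.1]
      _ ≤ C * (N : ℝ) ^ Q.card := by
          have ham : (Finset.univ.filter fun j => ForwardFixedFin Q j).card ≤ m :=
            (Finset.card_filter_le _ _).trans (by simp)
          have hrm : Q.card ≤ m := by
            rw [← card_notFF hQ.1]
            exact (Finset.card_filter_le _ _).trans (by simp)
          rw [mul_pow, hCdef]
          calc S ^ (Finset.univ.filter fun j => ForwardFixedFin Q j).card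
                * ((2 : ℝ) ^ Q.card * (N : ℝ) ^ Q.card)
              = (S ^ (Finset.univ.filter fun j => ForwardFixedFin Q j).card
                  * (2 : ℝ) ^ Q.card) * (N : ℝ) ^ Q.card := by ring
            _ ≤ (S ^ m * 2 ^ m) * (N : ℝ) ^ Q.card := by
                apply mul_le_mul_of_nonneg_right _ (pow_nonneg (Nat.cast_nonneg N) _)
                exact mul_le_mul (pow_le_pow_right₀ hS1 ham)
                  (pow_le_pow_right₀ one_le_two hrm)
                  (pow_nonneg (by norm_num) _)
                  (pow_nonneg (zero_le_one.trans hS1) m)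
  refine ⟨⟨C, main⟩, fun hnp => ⟨C, fun N hN => (main N hN).trans ?_⟩⟩
  push_neg at hnp
  obtain ⟨A₀, hA₀, hA₀card⟩ := hnp
  have h3 : 3 ≤ A₀.card := by
    have := hQ.2 A₀ hA₀
    omega
  have hsumc : ∑ A ∈ Q, A.card = m := sum_card_atoms hQ.1
  have h2r1 : 2 * Q.card + 1 ≤ m := by
    have he : ∑ A ∈ Q, A.card = A₀.card + ∑ A ∈ Q.erase A₀, A.card :=
      (Finset.add_sum_erase Q _ hA₀).symm
    have hge : 2 * (Q.erase A₀).card ≤ ∑ A ∈ Q.erase A₀, A.card := by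
      calc 2 * (Q.erase A₀).card = ∑ _A ∈ Q.erase A₀, 2 := by
            rw [Finset.sum_const, smul_eq_mul, mul_comm]
        _ ≤ _ := Finset.sum_le_sum fun A hA => hQ.2 A (Finset.mem_of_mem_erase hA)
    have hc : (Q.erase A₀).card = Q.card - 1 := Finset.card_erase_of_mem hA₀
    have hQpos : 1 ≤ Q.card := Finset.card_pos.mpr ⟨A₀, hA₀⟩
    omega
  have hrle : (Q.card : ℝ) ≤ ((m : ℝ) - 1) / 2 := by
    have : ((2 * Q.card + 1 : ℕ) : ℝ) ≤ (m : ℝ) := by exact_mod_cast h2r1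
    push_cast at this
    linarith
  have hN1 : (1 : ℝ) ≤ (N : ℝ) := by exact_mod_cast hN
  calc C * (N : ℝ) ^ Q.card = C * (N : ℝ) ^ (Q.card : ℝ) := by
        rw [Real.rpow_natCast]
    _ ≤ C * (N : ℝ) ^ (((m : ℝ) - 1) / 2) :=
        mul_le_mul_of_nonneg_left (Real.rpow_le_rpow_of_exponent_le hN1 hrle) hC0

end
end

section
/- Let m ≥ 2 be even and let Q be a pairing of {1, …, m} (a partition into two-element atoms) different from the natural pairing Q̄ = {{1,2}, {3,4}, …, {m−1, m}}. For a tuple of integers 0 ≤ n₁ ≤ … ≤ n_m, call n_j − n_{j−1} a forward step of Q if j is not the smallest index of its atom (with n_0 = 0), and call n_{j+1} − n_j a backward step of Q if 1 ≤ j ≤ m − 1 and j is not the largest index of its atom. Then for every L > 0 there is a constant C = C(L, m) such that for every N ≥ 1, the number of tuples 0 ≤ n₁ ≤ … ≤ n_m ≤ N all of whose forward steps and all of whose backward steps are less than L is at most C N^{m/2 − 1}. -/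
open Filter
open scoped Classical

noncomputable section

/-- A pairing is a partition all of whose atoms have exactly two elements. -/
def IsPairing {m : ℕ} (Q : Finset (Finset (Fin m))) : Prop :=
  IsPartitionFin Q ∧ ∀ A ∈ Q, A.card = 2

/-- The natural pairing `{{1,2},{3,4},…,{m−1,m}}` (in 0-based indexing, the atoms are
`{2k, 2k+1}`). -/
def naturalPairing (m : ℕ) : Finset (Finset (Fin m)) :=
  (Finset.range (m / 2)).image fun k => Finset.univ.filter fun x : Fin m => x.val / 2 = k

/-- `j` is not the largest element of its atom of `Q` (so `n_{j+1} − n_j` is a backward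
step). -/
def BackwardFixedFin {m : ℕ} (Q : Finset (Finset (Fin m))) (j : Fin m) : Prop :=
  ∃ A ∈ Q, j ∈ A ∧ ∃ i ∈ A, j < i

namespace Aux

variable {m : ℕ} {Q : Finset (Finset (Fin m))}

lemma atom_unique (hQ : IsPairing Q) (j : Fin m) :
    ∃ i : Fin m, i ≠ j ∧ ({i, j} : Finset (Fin m)) ∈ Q ∧
      ∀ A ∈ Q, j ∈ A → A = {i, j} := by
  obtain ⟨A, ⟨hAQ, hjA⟩, huniq⟩ := hQ.1.2 j
  have hcard := hQ.2 A hAQ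
  obtain ⟨a, b, hab, rfl⟩ := Finset.card_eq_two.1 hcard
  have huniq' : ∀ A' ∈ Q, j ∈ A' → A' = {a, b} := fun A' h1 h2 => huniq A' ⟨h1, h2⟩
  rcases Finset.mem_insert.1 hjA with h | h
  · subst h
    refine ⟨b, fun hb => hab hb.symm, ?_, ?_⟩
    · rwa [Finset.pair_comm]
    · intro A' h1 h2; rw [huniq' A' h1 h2, Finset.pair_comm]
  · have : j = b := Finset.mem_singleton.1 h
    subst this
    exact ⟨a, hab, hAQ, huniq'⟩

def partner (hQ : IsPairing Q) (j : Fin m) : Fin m := (atom_unique hQ j).choose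

lemma partner_ne (hQ : IsPairing Q) (j : Fin m) : partner hQ j ≠ j :=
  (atom_unique hQ j).choose_spec.1

lemma pair_mem (hQ : IsPairing Q) (j : Fin m) :
    ({partner hQ j, j} : Finset (Fin m)) ∈ Q :=
  (atom_unique hQ j).choose_spec.2.1

lemma atom_eq (hQ : IsPairing Q) (j : Fin m) :
    ∀ A ∈ Q, j ∈ A → A = {partner hQ j, j} :=
  (atom_unique hQ j).choose_spec.2.2

lemma partner_partner (hQ : IsPairing Q) (j : Fin m) :
    partner hQ (partner hQ j) = j := by
  set i := partner hQ j with hi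
  have h1 : ({i, j} : Finset (Fin m)) ∈ Q := pair_mem hQ j
  have h2 : i ∈ ({i, j} : Finset (Fin m)) := Finset.mem_insert_self _ _
  have h3 := atom_eq hQ i _ h1 h2
  have : j ∈ ({partner hQ i, i} : Finset (Fin m)) := by
    rw [← h3]; exact Finset.mem_insert_of_mem (Finset.mem_singleton_self _)
  rcases Finset.mem_insert.1 this with h | h
  · exact h.symm
  · exact absurd (Finset.mem_singleton.1 h) (fun hh => (partner_ne hQ j) hh.symm)

lemma forward_iff (hQ : IsPairing Q) (j : Fin m) :
    ForwardFixedFin Q j ↔ partner hQ j < j := by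
  constructor
  · rintro ⟨A, hAQ, hjA, i, hiA, hij⟩
    have := atom_eq hQ j A hAQ hjA
    subst this
    rcases Finset.mem_insert.1 hiA with h | h
    · rwa [← h]
    · exact absurd (Finset.mem_singleton.1 h) (ne_of_lt hij)
  · intro h
    exact ⟨{partner hQ j, j}, pair_mem hQ j,
      Finset.mem_insert_of_mem (Finset.mem_singleton_self _),
      partner hQ j, Finset.mem_insert_self _ _, h⟩

lemma backward_iff (hQ : IsPairing Q) (j : Fin m) :
    BackwardFixedFin Q j ↔ j < partner hQ j := by
  constructor
  · rintro ⟨A, hAQ, hjA, i, hiA, hij⟩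
    have := atom_eq hQ j A hAQ hjA
    subst this
    rcases Finset.mem_insert.1 hiA with h | h
    · rwa [← h]
    · exact absurd (Finset.mem_singleton.1 h) (ne_of_gt hij)
  · intro h
    exact ⟨{partner hQ j, j}, pair_mem hQ j,
      Finset.mem_insert_of_mem (Finset.mem_singleton_self _),
      partner hQ j, Finset.mem_insert_self _ _, h⟩

lemma not_forward_iff (hQ : IsPairing Q) (j : Fin m) :
    ¬ ForwardFixedFin Q j ↔ j < partner hQ j := by
  rw [forward_iff hQ j]
  rcases lt_trichotomy (partner hQ j) j with h | h | h
  · simp [h, asymm h]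
  · exact absurd h (partner_ne hQ j)
  · simp [h, asymm h]

lemma card_forward (hQ : IsPairing Q) (hmeven : Even m) :
    (Finset.univ.filter fun j : Fin m => ForwardFixedFin Q j).card = m / 2 := by
  classical
  have hcardeq :
      (Finset.univ.filter fun j : Fin m => ForwardFixedFin Q j).card =
      (Finset.univ.filter fun j : Fin m => ¬ ForwardFixedFin Q j).card := by
    apply Finset.card_bij' (fun j _ => partner hQ j) (fun j _ => partner hQ j)
    · intro j hj
      simp only [Finset.mem_filter, Finset.mem_univ, true_and] at hj ⊢
      rw [not_forward_iff hQ, partner_partner hQ]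
      exact (forward_iff hQ j).1 hj
    · intro j hj
      simp only [Finset.mem_filter, Finset.mem_univ, true_and] at hj ⊢
      rw [forward_iff hQ, partner_partner hQ]
      exact (not_forward_iff hQ j).1 hj
    · intro j _; exact partner_partner hQ j
    · intro j _; exact partner_partner hQ j
  have htot := Finset.card_filter_add_card_filter_not
    (s := (Finset.univ : Finset (Fin m))) (p := fun j => ForwardFixedFin Q j)
  rw [Finset.card_univ, Fintype.card_fin] at htot
  omega

-- surjectivity: every max is a (min)+1
lemma max_eq_succ_min (hQ : IsPairing Q) (hmeven : Even m)
    (H : ∀ j : Fin m, ∀ h : j.val + 1 < m,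
        j < partner hQ j → partner hQ ⟨j.val + 1, h⟩ < ⟨j.val + 1, h⟩) :
    ∀ t : Fin m, partner hQ t < t →
      ∃ s : Fin m, s < partner hQ s ∧ s.val + 1 = t.val := by
  classical
  set G := Finset.univ.filter fun j : Fin m => j < partner hQ j with hG
  set F := Finset.univ.filter fun j : Fin m => partner hQ j < j with hF
  have hGlt : ∀ j ∈ G, j.val + 1 < m := by
    intro j hj
    simp only [hG, Finset.mem_filter] at hj
    have : j.val < (partner hQ j).val := hj.2
    have := (partner hQ j).isLt
    omega
  have hmaps : ∀ j (hj : j ∈ G), (⟨j.val + 1, hGlt j hj⟩ : Fin m) ∈ F := by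
    intro j hj
    have hj' := hj
    simp only [hG, Finset.mem_filter] at hj'
    simp only [hF, Finset.mem_filter]
    exact ⟨Finset.mem_univ _, H j (hGlt j hj) hj'.2⟩
  have hcardF : F.card = m / 2 := by
    rw [hF]
    rw [← card_forward hQ hmeven]
    congr 1
    ext j
    simp [forward_iff hQ]
  have hcardG : G.card = m / 2 := by
    have htot := Finset.card_filter_add_card_filter_not
      (s := (Finset.univ : Finset (Fin m))) (p := fun j : Fin m => partner hQ j < j)
    rw [Finset.card_univ, Fintype.card_fin] at htot
    have : (Finset.univ.filter fun j : Fin m => ¬ partner hQ j < j) = G := by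
      ext j
      simp only [hG, Finset.mem_filter, Finset.mem_univ, true_and]
      constructor
      · intro h
        rcases lt_trichotomy (partner hQ j) j with h' | h' | h'
        · exact absurd h' h
        · exact absurd h' (partner_ne hQ j)
        · exact h'
      · intro h; exact asymm h
    rw [this] at htot
    rw [← hF] at htot
    have hme : m % 2 = 0 := Nat.even_iff.1 hmeven
    omega
  -- image of G under succ = F
  have himage : G.image (fun j : Fin m =>
      if h : j.val + 1 < m then (⟨j.val + 1, h⟩ : Fin m) else j) = F := by
    apply Finset.eq_of_subset_of_card_le
    · intro t ht
      obtain ⟨j, hjG, hjt⟩ := Finset.mem_image.1 ht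
      rw [dif_pos (hGlt j hjG)] at hjt
      rw [← hjt]; exact hmaps j hjG
    · rw [hcardF, ← hcardG]
      apply le_of_eq
      symm
      apply Finset.card_image_of_injOn
      intro a ha b hb hab
      have h1 : a.val + 1 < m := hGlt a (Finset.mem_coe.1 ha)
      have h2 : b.val + 1 < m := hGlt b (Finset.mem_coe.1 hb)
      simp only at hab
      rw [dif_pos h1, dif_pos h2] at hab
      have : a.val + 1 = b.val + 1 := Fin.val_eq_of_eq hab
      exact Fin.ext (by omega)
  intro t ht
  have htF : t ∈ F := by simp [hF, ht]
  rw [← himage] at htF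
  obtain ⟨s, hsG, hst⟩ := Finset.mem_image.1 htF
  rw [dif_pos (hGlt s hsG)] at hst
  simp only [hG, Finset.mem_filter] at hsG
  exact ⟨s, hsG.2, by rw [← hst]⟩

-- alternation
lemma alternation (hQ : IsPairing Q) (hmeven : Even m)
    (H : ∀ j : Fin m, ∀ h : j.val + 1 < m,
        j < partner hQ j → partner hQ ⟨j.val + 1, h⟩ < ⟨j.val + 1, h⟩) :
    ∀ k : ℕ, ∀ h : k < m, (Even k ↔ (⟨k, h⟩ : Fin m) < partner hQ ⟨k, h⟩) := by
  intro k
  induction k using Nat.strong_induction_on with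
  | _ k ih =>
    intro h
    match k with
    | 0 =>
      simp only [Even.zero, true_iff]
      have hne := partner_ne hQ (⟨0, h⟩ : Fin m)
      have : (partner hQ ⟨0, h⟩).val ≠ 0 := fun hh => hne (Fin.ext hh)
      rw [Fin.lt_def]
      simpa using Nat.pos_of_ne_zero this
    | k' + 1 =>
      have hk' : k' < m := by omega
      have IH := ih k' (by omega) hk'
      -- (k'+1) is max iff k' is min
      have key : partner hQ ⟨k' + 1, h⟩ < ⟨k' + 1, h⟩ ↔
          (⟨k', hk'⟩ : Fin m) < partner hQ ⟨k', hk'⟩ := by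
        constructor
        · intro hmax
          obtain ⟨s, hs, hsval⟩ := max_eq_succ_min hQ hmeven H ⟨k' + 1, h⟩ hmax
          have hsv : s.val + 1 = k' + 1 := hsval
          have : s = (⟨k', hk'⟩ : Fin m) := Fin.ext (show s.val = k' by omega)
          rwa [this] at hs
        · intro hmin
          exact H ⟨k', hk'⟩ h hmin
      have hnprog : ¬ ((⟨k' + 1, h⟩ : Fin m) < partner hQ ⟨k' + 1, h⟩) ↔
          partner hQ ⟨k' + 1, h⟩ < ⟨k' + 1, h⟩ := by
        rcases lt_trichotomy (partner hQ ⟨k' + 1, h⟩) (⟨k' + 1, h⟩ : Fin m) with h' | h' | h'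
        · simp [h', asymm h']
        · exact absurd h' (partner_ne hQ _)
        · simp [h', asymm h']
      rw [Nat.even_add_one, IH, ← key, ← hnprog]
      tauto
  

-- under H, partner of 2k is 2k+1
lemma partner_even (hQ : IsPairing Q) (hmeven : Even m)
    (H : ∀ j : Fin m, ∀ h : j.val + 1 < m,
        j < partner hQ j → partner hQ ⟨j.val + 1, h⟩ < ⟨j.val + 1, h⟩) :
    ∀ k : ℕ, ∀ h : 2 * k + 1 < m,
      partner hQ ⟨2 * k, Nat.lt_of_succ_lt h⟩ = ⟨2 * k + 1, h⟩ := by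
  suffices hs : ∀ n : ℕ, ∀ k : ℕ, m - 2 * k ≤ n → ∀ h : 2 * k + 1 < m,
      partner hQ ⟨2 * k, Nat.lt_of_succ_lt h⟩ = ⟨2 * k + 1, h⟩ by
    intro k h
    exact hs (m - 2 * k) k le_rfl h
  intro n
  induction n with
  | zero => intro k hle h; omega
  | succ n ih =>
    intro k hle h
    set j : Fin m := ⟨2 * k, Nat.lt_of_succ_lt h⟩ with hj
    have hmin : j < partner hQ j :=
      (alternation hQ hmeven H (2 * k) (Nat.lt_of_succ_lt h)).1 (by simp [Nat.even_iff])
    have hmax : partner hQ (partner hQ j) < partner hQ j := by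
      rw [partner_partner hQ]; exact hmin
    have hodd : ¬ Even (partner hQ j).val := by
      intro hev
      have halt := (alternation hQ hmeven H (partner hQ j).val (partner hQ j).isLt).1 hev
      have hfin : (⟨(partner hQ j).val, (partner hQ j).isLt⟩ : Fin m) = partner hQ j :=
        Fin.ext rfl
      rw [hfin] at halt
      exact absurd hmax (asymm halt)
    obtain ⟨k', hk'⟩ : ∃ k', (partner hQ j).val = 2 * k' + 1 := by
      rcases Nat.even_or_odd (partner hQ j).val with he | ho
      · exact absurd he hodd
      · obtain ⟨k', hk'⟩ := ho; exact ⟨k', by omega⟩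
    have hgt : (2 * k : ℕ) < (partner hQ j).val := hmin
    have hkk' : k ≤ k' := by omega
    rcases eq_or_lt_of_le hkk' with heq | hlt
    · subst heq
      exact Fin.ext hk'
    · exfalso
      have h2k' : 2 * k' + 1 < m := by rw [← hk']; exact (partner hQ j).isLt
      have hih := ih k' (by omega) h2k'
      have h1 : partner hQ ⟨2 * k' + 1, h2k'⟩ = ⟨2 * k', Nat.lt_of_succ_lt h2k'⟩ := by
        rw [← hih, partner_partner hQ]
      have h2 : (⟨2 * k' + 1, h2k'⟩ : Fin m) = partner hQ j := Fin.ext hk'.symm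
      rw [h2, partner_partner hQ] at h1
      have : (2 * k : ℕ) = 2 * k' := Fin.val_eq_of_eq h1
      omega

lemma pair_filter_eq (k : ℕ) (h : 2 * k + 1 < m) :
    (Finset.univ.filter fun x : Fin m => x.val / 2 = k) =
      ({⟨2 * k, Nat.lt_of_succ_lt h⟩, ⟨2 * k + 1, h⟩} : Finset (Fin m)) := by
  ext x
  simp only [Finset.mem_filter, Finset.mem_univ, true_and, Finset.mem_insert,
    Finset.mem_singleton, Fin.ext_iff]
  show x.val / 2 = k ↔ x.val = 2 * k ∨ x.val = 2 * k + 1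
  omega

lemma eq_natural (hQ : IsPairing Q) (hm : 2 ≤ m) (hmeven : Even m)
    (H : ∀ j : Fin m, ∀ h : j.val + 1 < m,
        j < partner hQ j → partner hQ ⟨j.val + 1, h⟩ < ⟨j.val + 1, h⟩) :
    Q = naturalPairing m := by
  have hm2 : m % 2 = 0 := Nat.even_iff.1 hmeven
  have key : ∀ k : ℕ, ∀ hk2 : 2 * k + 1 < m,
      ({⟨2 * k, Nat.lt_of_succ_lt hk2⟩, ⟨2 * k + 1, hk2⟩} : Finset (Fin m)) ∈ Q := by
    intro k hk2
    have := pair_mem hQ (⟨2 * k, Nat.lt_of_succ_lt hk2⟩ : Fin m)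
    rwa [partner_even hQ hmeven H k hk2, Finset.pair_comm] at this
  ext A
  constructor
  · intro hA
    obtain ⟨j, hj⟩ := hQ.1.1 A hA
    set k := j.val / 2 with hkdef
    have hk : k < m / 2 := Nat.div_lt_div_of_lt_of_dvd hmeven.two_dvd j.isLt
    have hkm : 2 * k + 1 < m := by omega
    have hAeq : A = ({⟨2 * k, Nat.lt_of_succ_lt hkm⟩, ⟨2 * k + 1, hkm⟩} : Finset (Fin m)) := by
      have hmem := key k hkm
      have hjmem : j ∈ ({⟨2 * k, Nat.lt_of_succ_lt hkm⟩, ⟨2 * k + 1, hkm⟩} : Finset (Fin m)) := by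
        simp only [Finset.mem_insert, Finset.mem_singleton, Fin.ext_iff]
        show j.val = 2 * k ∨ j.val = 2 * k + 1
        omega
      have h1 := atom_eq hQ j A hA hj
      have h2 := atom_eq hQ j _ hmem hjmem
      rw [h1, ← h2]
    rw [hAeq]
    unfold naturalPairing
    rw [Finset.mem_image]
    exact ⟨k, Finset.mem_range.2 hk, (pair_filter_eq k hkm)⟩
  · intro hA
    unfold naturalPairing at hA
    obtain ⟨k, hk, hAeq⟩ := Finset.mem_image.1 hA
    rw [Finset.mem_range] at hk
    have hkm : 2 * k + 1 < m := by omega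
    rw [← hAeq, pair_filter_eq k hkm]
    exact key k hkm


end Aux

open Aux in
/-- Lemma 5.5 of the paper: if `Q` is a pairing different from the natural pairing, the
number of monotone tuples `0 ≤ n₁ ≤ … ≤ n_m ≤ N` all of whose forward and backward steps
are less than `L` is `O(N^{m/2 − 1})` (the constant depending on `L` and `m`). -/
theorem stmt_12
    (m : ℕ) (hm : 2 ≤ m) (hmeven : Even m)
    (Q : Finset (Finset (Fin m))) (hQ : IsPairing Q) (hQne : Q ≠ naturalPairing m)
    (L : ℝ) (hL : 0 < L) :
    ∃ C : ℝ, ∀ N : ℕ, 1 ≤ N →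
      (((Fintype.piFinset fun _ : Fin m => Finset.range (N + 1)).filter
          (fun n : Fin m → ℕ =>
            (∀ i j : Fin m, i ≤ j → n i ≤ n j) ∧
            (∀ j : Fin m, ForwardFixedFin Q j → ((n j - prevVal n j : ℕ) : ℝ) < L) ∧
            (∀ j : Fin m, ∀ h : j.val + 1 < m, BackwardFixedFin Q j →
              ((n ⟨j.val + 1, h⟩ - n j : ℕ) : ℝ) < L))).card : ℝ)
        ≤ C * (N : ℝ) ^ (m / 2 - 1) := by
  classical
  -- find the special index j*
  have hnH : ¬ (∀ j : Fin m, ∀ h : j.val + 1 < m,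
      j < partner hQ j → partner hQ ⟨j.val + 1, h⟩ < ⟨j.val + 1, h⟩) :=
    fun H => hQne (eq_natural hQ hm hmeven H)
  push_neg at hnH
  obtain ⟨jstar, hjh, hjmin, hjnot⟩ := hnH
  set js : Fin m := ⟨jstar.val + 1, hjh⟩ with hjs
  have hjsnf : ¬ ForwardFixedFin Q js := by
    rw [not_forward_iff hQ]
    exact lt_of_le_of_ne hjnot (Ne.symm (partner_ne hQ js))
  have hjback : BackwardFixedFin Q jstar := (backward_iff hQ jstar).2 hjmin
  set K : ℕ := ⌈L⌉₊ with hK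
  refine ⟨(K : ℝ) ^ (m / 2 + 1) * 2 ^ (m / 2 - 1), ?_⟩
  intro N hN
  set s := ((Fintype.piFinset fun _ : Fin m => Finset.range (N + 1)).filter
          (fun n : Fin m → ℕ =>
            (∀ i j : Fin m, i ≤ j → n i ≤ n j) ∧
            (∀ j : Fin m, ForwardFixedFin Q j → ((n j - prevVal n j : ℕ) : ℝ) < L) ∧
            (∀ j : Fin m, ∀ h : j.val + 1 < m, BackwardFixedFin Q j →
              ((n ⟨j.val + 1, h⟩ - n j : ℕ) : ℝ) < L))) with hs
  set bnd : Fin m → ℕ := fun i => if ForwardFixedFin Q i ∨ i = js then K else N + 1 with hbnd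
  set B := Fintype.piFinset fun i : Fin m => Finset.range (bnd i) with hB
  have hprevle : ∀ n ∈ s, ∀ j : Fin m, prevVal n j ≤ n j := by
    intro n hn j
    rw [hs, Finset.mem_filter] at hn
    unfold prevVal
    split
    · exact Nat.zero_le _
    · exact hn.2.1 _ j (by rw [Fin.le_def]; simp)
  -- injectivity
  have hinj : Set.InjOn (fun (n : Fin m → ℕ) (j : Fin m) => n j - prevVal n j) ↑s := by
    intro n hn n' hn' heq
    funext j
    obtain ⟨v, hv⟩ : ∃ v : ℕ, v = j.val := ⟨j.val, rfl⟩
    have : ∀ v : ℕ, ∀ hvm : v < m, n ⟨v, hvm⟩ = n' ⟨v, hvm⟩ := by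
      intro v
      induction v using Nat.strong_induction_on with
      | _ v ihv =>
        intro hvm
        have hprev : prevVal n ⟨v, hvm⟩ = prevVal n' ⟨v, hvm⟩ := by
          unfold prevVal
          split
          · rfl
          · next h0 =>
              have hv0 : v ≠ 0 := h0
              exact ihv (v - 1) (by omega) _
        have h1 : n ⟨v, hvm⟩ - prevVal n ⟨v, hvm⟩ = n' ⟨v, hvm⟩ - prevVal n' ⟨v, hvm⟩ :=
          congrFun heq ⟨v, hvm⟩
        have h2 := hprevle n (Finset.mem_coe.1 hn) ⟨v, hvm⟩
        have h3 := hprevle n' (Finset.mem_coe.1 hn') ⟨v, hvm⟩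
        omega
    have := this j.val j.isLt
    simpa using this
  -- maps to B
  have hmaps : ∀ n ∈ s, (fun j : Fin m => n j - prevVal n j) ∈ B := by
    intro n hn
    have hn' := hn
    rw [hs, Finset.mem_filter] at hn'
    have hbox := hn'.1
    have hfwd := hn'.2.2.1
    have hbwd := hn'.2.2.2
    rw [hB, Fintype.mem_piFinset]
    intro i
    rw [Finset.mem_range, hbnd]
    show n i - prevVal n i < if ForwardFixedFin Q i ∨ i = js then K else N + 1
    split
    · next hcase =>
      rcases Classical.em (ForwardFixedFin Q i) with hf | hf
      · have := hfwd i hf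
        have hle : (L : ℝ) ≤ (K : ℝ) := Nat.le_ceil L
        exact_mod_cast this.trans_le hle
      · have hi : i = js := by tauto
        subst hi
        have hb := hbwd jstar hjh hjback
        have hjsval : js.val = jstar.val + 1 := rfl
        have hpv : prevVal n js = n jstar := by
          have heqf : (⟨js.val - 1, lt_of_le_of_lt (Nat.sub_le _ _) js.isLt⟩ : Fin m) = jstar :=
            Fin.ext (by show js.val - 1 = jstar.val; omega)
          unfold prevVal
          rw [if_neg (by omega), heqf]
        have hle : L ≤ (K : ℝ) := Nat.le_ceil L
        rw [hpv]
        exact_mod_cast hb.trans_le hle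
    · next hcase =>
      have hbox' := Fintype.mem_piFinset.1 hbox i
      rw [Finset.mem_range] at hbox'
      have := hprevle n hn i
      omega
  have hcard1 : s.card ≤ B.card := Finset.card_le_card_of_injOn _ hmaps hinj
  have hFcard := card_forward hQ hmeven
  have hsplit : Finset.univ.filter (fun i : Fin m => ForwardFixedFin Q i ∨ i = js)
      = insert js (Finset.univ.filter fun i : Fin m => ForwardFixedFin Q i) := by
    ext i
    simp only [Finset.mem_filter, Finset.mem_univ, true_and, Finset.mem_insert]
    tauto
  have hBadcard : (Finset.univ.filter
      (fun i : Fin m => ForwardFixedFin Q i ∨ i = js)).card = m / 2 + 1 := by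
    rw [hsplit, Finset.card_insert_of_notMem (by
      simp only [Finset.mem_filter, Finset.mem_univ, true_and]
      exact hjsnf), hFcard]
  have hGoodcard : (Finset.univ.filter
      (fun i : Fin m => ¬ (ForwardFixedFin Q i ∨ i = js))).card = m / 2 - 1 := by
    have htot := Finset.card_filter_add_card_filter_not
      (s := (Finset.univ : Finset (Fin m)))
      (p := fun i : Fin m => ForwardFixedFin Q i ∨ i = js)
    rw [Finset.card_univ, Fintype.card_fin, hBadcard] at htot
    have hme : m % 2 = 0 := Nat.even_iff.1 hmeven
    omega
  have hBcard : B.card = K ^ (m / 2 + 1) * (N + 1) ^ (m / 2 - 1) := by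
    rw [hB, Fintype.card_piFinset]
    simp only [Finset.card_range]
    rw [← Finset.prod_filter_mul_prod_filter_not Finset.univ
      (fun i : Fin m => ForwardFixedFin Q i ∨ i = js)]
    have h1 : ∀ i ∈ Finset.univ.filter (fun i : Fin m => ForwardFixedFin Q i ∨ i = js),
        bnd i = K := by
      intro i hi
      simp only [Finset.mem_filter] at hi
      rw [hbnd]
      exact if_pos hi.2
    have h2 : ∀ i ∈ Finset.univ.filter (fun i : Fin m => ¬ (ForwardFixedFin Q i ∨ i = js)),
        bnd i = N + 1 := by
      intro i hi
      simp only [Finset.mem_filter] at hi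
      rw [hbnd]
      exact if_neg hi.2
    rw [Finset.prod_congr rfl h1, Finset.prod_congr rfl h2, Finset.prod_const,
      Finset.prod_const, hBadcard, hGoodcard]
  -- final real estimate
  have hcard2 : (s.card : ℝ) ≤ (K : ℝ) ^ (m / 2 + 1) * ((N : ℝ) + 1) ^ (m / 2 - 1) := by
    have : (s.card : ℝ) ≤ (B.card : ℝ) := by exact_mod_cast hcard1
    rw [hBcard] at this
    push_cast at this
    exact this
  refine hcard2.trans ?_
  have hNpos : (0 : ℝ) < (N : ℝ) := by exact_mod_cast hN
  have hstep : ((N : ℝ) + 1) ^ (m / 2 - 1) ≤ (2 * (N : ℝ)) ^ (m / 2 - 1) := by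
    apply pow_le_pow_left₀ (by positivity)
    have : (1 : ℝ) ≤ (N : ℝ) := by exact_mod_cast hN
    linarith
  calc (K : ℝ) ^ (m / 2 + 1) * ((N : ℝ) + 1) ^ (m / 2 - 1)
      ≤ (K : ℝ) ^ (m / 2 + 1) * (2 * (N : ℝ)) ^ (m / 2 - 1) := by
        apply mul_le_mul_of_nonneg_left hstep (by positivity)
    _ = (K : ℝ) ^ (m / 2 + 1) * 2 ^ (m / 2 - 1) * (N : ℝ) ^ (m / 2 - 1) := by
        rw [mul_pow]; ring

end
end

section
/- Let (X_n)_{n≥1} be a stationary sequence of square-integrable real random variables on a probability space (Ω, P): for all j, k ≥ 1, the joint law of (X_{1+k}, …, X_{j+k}) equals the joint law of (X₁, …, X_j). Let S_n = Σ_{k=1}^n X_k, and suppose there are constants C > 0 and ρ > 0 with E(S_n²) ≤ C n^{2ρ} for all n ≥ 1. Then for every ε > 0, S_n / n^{max(ρ, 1/2) + ε} → 0 almost surely as n → ∞. -/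
open MeasureTheory Filter Topology

/-- Deterministic dyadic chaining lemma: if every dyadic block increment of level `j`
(inside `[0, N]`) is bounded by `φ j`, then any increment over `[a, a+ℓ]` with `2^J ∣ a`,
`ℓ < 2^J`, `a + ℓ ≤ N` is bounded by `∑_{j<J} φ j`. -/
private lemma chain_aux (s : ℕ → ℝ) (φ : ℕ → ℝ) (hφ : ∀ j, 0 ≤ φ j) (N : ℕ)
    (hb : ∀ j i : ℕ, (i + 1) * 2 ^ j ≤ N →
      |s ((i + 1) * 2 ^ j) - s (i * 2 ^ j)| ≤ φ j) :
    ∀ J a ℓ : ℕ, 2 ^ J ∣ a → ℓ < 2 ^ J → a + ℓ ≤ N →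
      |s (a + ℓ) - s a| ≤ ∑ j ∈ Finset.range J, φ j := by
  intro J
  induction J with
  | zero =>
      intro a ℓ _ hℓ _
      interval_cases ℓ
      simp
  | succ J ih =>
      intro a ℓ hdvd hℓ hN
      by_cases hc : ℓ < 2 ^ J
      · have h1 := ih a ℓ (dvd_trans (pow_dvd_pow 2 (Nat.le_succ J)) hdvd) hc hN
        have h2 : (0:ℝ) ≤ φ J := hφ J
        rw [Finset.sum_range_succ]
        linarith
      · push_neg at hc
        obtain ⟨i2, hi2⟩ := hdvd
        set i := 2 * i2 with hi
        have ha : i * 2 ^ J = a := by rw [hi2, pow_succ]; ring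
        have hip : (i + 1) * 2 ^ J = a + 2 ^ J := by rw [add_mul, one_mul, ha]
        have hpos : 0 < 2 ^ J := Nat.two_pow_pos J
        have hℓ' : ℓ < 2 ^ J * 2 := by rw [← pow_succ]; exact hℓ
        have h1 : |s (a + 2 ^ J) - s a| ≤ φ J := by
          have := hb J i (by omega)
          rwa [hip, ha] at this
        have h2 : |s (a + ℓ) - s (a + 2 ^ J)| ≤ ∑ j ∈ Finset.range J, φ j := by
          have hdvd2 : 2 ^ J ∣ a + 2 ^ J := ⟨i + 1, by rw [← hip]; ring⟩
          have := ih (a + 2 ^ J) (ℓ - 2 ^ J) hdvd2 (by omega) (by omega)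
          have heq : a + 2 ^ J + (ℓ - 2 ^ J) = a + ℓ := by omega
          rwa [heq] at this
        have h3 : |s (a + ℓ) - s a| ≤ |s (a + ℓ) - s (a + 2 ^ J)| + |s (a + 2 ^ J) - s a| := by
          have := abs_add_le (s (a + ℓ) - s (a + 2 ^ J)) (s (a + 2 ^ J) - s a)
          simpa using this
        rw [Finset.sum_range_succ]
        linarith

/-- Chebyshev's inequality for the second moment. -/
private lemma cheb_aux {Ω : Type*} [MeasurableSpace Ω] (P : Measure Ω)
    (f : Ω → ℝ) (hfm : Measurable f) (hf2 : Integrable (fun ω => f ω ^ 2) P)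
    (c : ℝ) (hc : 0 < c) :
    P {ω | c ≤ |f ω|} ≤ ENNReal.ofReal ((∫ ω, f ω ^ 2 ∂P) / c ^ 2) := by
  have hsub : {ω | c ≤ |f ω|} ⊆
      {ω | ENNReal.ofReal (c ^ 2) ≤ ENNReal.ofReal (f ω ^ 2)} := by
    intro ω h
    simp only [Set.mem_setOf_eq] at h ⊢
    apply ENNReal.ofReal_le_ofReal
    nlinarith [abs_nonneg (f ω), sq_abs (f ω)]
  have hmeas : AEMeasurable (fun ω => ENNReal.ofReal (f ω ^ 2)) P :=
    (ENNReal.measurable_ofReal.comp ((hfm.pow_const 2))).aemeasurable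
  calc P {ω | c ≤ |f ω|}
      ≤ P {ω | ENNReal.ofReal (c ^ 2) ≤ ENNReal.ofReal (f ω ^ 2)} := measure_mono hsub
    _ ≤ (∫⁻ ω, ENNReal.ofReal (f ω ^ 2) ∂P) / ENNReal.ofReal (c ^ 2) :=
        meas_ge_le_lintegral_div hmeas
          (by simp [ENNReal.ofReal_pos]; positivity) ENNReal.ofReal_ne_top
    _ = ENNReal.ofReal (∫ ω, f ω ^ 2 ∂P) / ENNReal.ofReal (c ^ 2) := by
        rw [MeasureTheory.ofReal_integral_eq_lintegral_ofReal hf2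
          (Filter.Eventually.of_forall fun ω => sq_nonneg (f ω))]
    _ = ENNReal.ofReal ((∫ ω, f ω ^ 2 ∂P) / c ^ 2) := by
        rw [ENNReal.ofReal_div_of_pos (by positivity)]

set_option maxHeartbeats 4000000 in
/-- Lemma 7.1 of the paper: if `(X_n)_{n≥1}` is a stationary sequence of square-integrable
random variables whose partial sums satisfy `E(S_n²) ≤ C n^{2ρ}`, then
`S_n / n^{max(ρ,1/2)+ε} → 0` almost surely for every `ε > 0`. -/
theorem stmt_14
    {Ω : Type*} [MeasurableSpace Ω] (P : Measure Ω) [IsProbabilityMeasure P]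
    (X : ℕ → Ω → ℝ)
    (hXm : ∀ n, Measurable (X n))
    (hXL2 : ∀ n, MemLp (X n) 2 P)
    -- stationarity: the law of (X_{1+k},…,X_{j+k}) does not depend on k
    (hstat : ∀ j k : ℕ,
      Measure.map (fun ω => fun i : Fin j => X (i.val + 1 + k) ω) P =
      Measure.map (fun ω => fun i : Fin j => X (i.val + 1) ω) P)
    (C ρ : ℝ) (hC : 0 < C) (hρ : 0 < ρ)
    (hvar : ∀ n : ℕ, 1 ≤ n →
      (∫ ω, (∑ k ∈ Finset.Icc 1 n, X k ω) ^ 2 ∂P) ≤ C * (n : ℝ) ^ (2 * ρ)) :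
    ∀ ε : ℝ, 0 < ε →
      ∀ᵐ ω ∂P, Tendsto
        (fun n : ℕ => (∑ k ∈ Finset.Icc 1 n, X k ω) / (n : ℝ) ^ (max ρ (1 / 2) + ε))
        atTop (𝓝 0) := by
  -- moment bound for shifted partial sums, via stationarity
  have key : ∀ a n : ℕ, 1 ≤ n →
      (∫ ω, (∑ k ∈ Finset.Ioc a (a + n), X k ω) ^ 2 ∂P) ≤ C * (n : ℝ) ^ (2 * ρ) := by
    intro a n hn
    have hmeas : ∀ b : ℕ, Measurable (fun ω => fun i : Fin n => X (i.val + 1 + b) ω) :=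
      fun b => measurable_pi_lambda _ fun i => hXm _
    have hg : Measurable (fun v : Fin n → ℝ => (∑ i, v i) ^ 2) :=
      (Finset.univ.measurable_sum fun i _ => measurable_pi_apply i).pow_const 2
    have hsum : ∀ (b : ℕ) (ω : Ω),
        ∑ k ∈ Finset.Ioc b (b + n), X k ω = ∑ i : Fin n, X (i.val + 1 + b) ω := by
      intro b ω
      rw [← Finset.Icc_add_one_left_eq_Ioc, ← Finset.Ico_add_one_right_eq_Icc, Finset.sum_Ico_eq_sum_range]
      rw [Fin.sum_univ_eq_sum_range (fun i => X (i + 1 + b) ω)]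
      have h1 : b + n + 1 - (b + 1) = n := by omega
      rw [h1]
      exact Finset.sum_congr rfl fun i _ => by rw [show b + 1 + i = i + 1 + b by omega]
    have e1 : ∀ b : ℕ,
        (∫ ω, (∑ k ∈ Finset.Ioc b (b + n), X k ω) ^ 2 ∂P) =
        ∫ v : Fin n → ℝ, (∑ i, v i) ^ 2
          ∂(Measure.map (fun ω => fun i : Fin n => X (i.val + 1 + b) ω) P) := by
      intro b
      rw [integral_map (hmeas b).aemeasurable hg.aestronglyMeasurable]
      refine integral_congr_ae (Filter.Eventually.of_forall fun ω => ?_)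
      show (∑ k ∈ Finset.Ioc b (b + n), X k ω) ^ 2 = (∑ i : Fin n, X (i.val + 1 + b) ω) ^ 2
      rw [hsum b ω]
    have e0 : (∫ ω, (∑ k ∈ Finset.Icc 1 n, X k ω) ^ 2 ∂P) =
        ∫ v : Fin n → ℝ, (∑ i, v i) ^ 2
          ∂(Measure.map (fun ω => fun i : Fin n => X (i.val + 1) ω) P) := by
      have := e1 0
      simpa [← Finset.Icc_add_one_left_eq_Ioc] using this
    rw [e1 a, hstat n a, ← e0]
    exact hvar n hn
  intro ε hε
  set q : ℝ := 1 / 2 + ε / 2 with hq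
  set β : ℝ := max ρ (1 / 2) + ε / 2 with hβ
  have hq0 : 0 ≤ q := by rw [hq]; linarith
  have hβ0 : 0 ≤ β := by
    have := le_max_right ρ (1 / 2 : ℝ); rw [hβ]; linarith
  -- the dyadic blocks
  set D : ℕ × ℕ → Ω → ℝ :=
    fun p ω => ∑ k ∈ Finset.Ioc (p.2 * 2 ^ p.1) (p.2 * 2 ^ p.1 + 2 ^ p.1), X k ω with hD
  set c : ℕ → ℕ → ℝ :=
    fun j i => (2 : ℝ) ^ ((j : ℝ) * (ρ + ε / 2)) * ((i : ℝ) + 1) ^ q with hcdef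
  have hcpos : ∀ j i, 0 < c j i := by
    intro j i
    apply mul_pos (Real.rpow_pos_of_pos (by norm_num) _)
    apply Real.rpow_pos_of_pos
    positivity
  have hDmeas : ∀ p, Measurable (D p) := fun p =>
    Finset.measurable_sum _ fun k _ => hXm k
  have hDsq : ∀ p, Integrable (fun ω => D p ω ^ 2) P := by
    intro p
    have : MemLp (fun ω =>
        ∑ k ∈ Finset.Ioc (p.2 * 2 ^ p.1) (p.2 * 2 ^ p.1 + 2 ^ p.1), X k ω) 2 P :=
      memLp_finset_sum _ fun k _ => hXL2 k
    exact this.integrable_sq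
  have hDmom : ∀ p : ℕ × ℕ,
      (∫ ω, D p ω ^ 2 ∂P) ≤ C * (2 : ℝ) ^ ((p.1 : ℝ) * (2 * ρ)) := by
    intro p
    have h1 := key (p.2 * 2 ^ p.1) (2 ^ p.1) (Nat.one_le_two_pow)
    have h2 : ((2 ^ p.1 : ℕ) : ℝ) ^ (2 * ρ) = (2 : ℝ) ^ ((p.1 : ℝ) * (2 * ρ)) := by
      rw [Nat.cast_pow, Nat.cast_ofNat, ← Real.rpow_natCast (2 : ℝ) p.1,
        ← Real.rpow_mul (by norm_num)]
    rw [h2] at h1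
    exact h1
  -- the exceptional events and Borel–Cantelli
  set w : ℕ → ℕ → ℝ :=
    fun j i => C * ((2 : ℝ) ^ (-ε)) ^ j * ((i : ℝ) + 1) ^ (-(1 + ε)) with hwdef
  have hwpos : ∀ j i, 0 < w j i := by
    intro j i
    apply mul_pos (mul_pos hC (pow_pos (Real.rpow_pos_of_pos (by norm_num) _) _))
    apply Real.rpow_pos_of_pos; positivity
  have hcsq : ∀ j i, c j i ^ 2 =
      (2 : ℝ) ^ ((j : ℝ) * (2 * ρ + ε)) * ((i : ℝ) + 1) ^ (1 + ε) := by
    intro j i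
    have e1 : ((2 : ℝ) ^ ((j : ℝ) * (ρ + ε / 2))) ^ (2 : ℕ) =
        (2 : ℝ) ^ ((j : ℝ) * (2 * ρ + ε)) := by
      rw [← Real.rpow_natCast ((2 : ℝ) ^ ((j : ℝ) * (ρ + ε / 2))) 2,
        ← Real.rpow_mul (by norm_num : (0:ℝ) ≤ 2)]
      congr 1
      push_cast
      ring
    have e2 : (((i : ℝ) + 1) ^ q) ^ (2 : ℕ) = ((i : ℝ) + 1) ^ (1 + ε) := by
      rw [← Real.rpow_natCast (((i : ℝ) + 1) ^ q) 2,
        ← Real.rpow_mul (by positivity : (0:ℝ) ≤ (i : ℝ) + 1)]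
      congr 1
      rw [hq]
      push_cast
      ring
    simp only [hcdef]
    rw [mul_pow, e1, e2]
  have hwc : ∀ j i, w j i * c j i ^ 2 = C * (2 : ℝ) ^ ((j : ℝ) * (2 * ρ)) := by
    intro j i
    rw [hcsq j i]
    simp only [hwdef]
    have hgeo : ((2 : ℝ) ^ (-ε)) ^ j = (2 : ℝ) ^ ((j : ℝ) * (-ε)) := by
      rw [← Real.rpow_natCast ((2 : ℝ) ^ (-ε)) j, ← Real.rpow_mul (by norm_num), mul_comm]
    rw [hgeo]
    have e2 : (2 : ℝ) ^ ((j : ℝ) * (-ε)) * (2 : ℝ) ^ ((j : ℝ) * (2 * ρ + ε)) =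
        (2 : ℝ) ^ ((j : ℝ) * (2 * ρ)) := by
      rw [← Real.rpow_add (by norm_num : (0:ℝ) < 2)]
      ring_nf
    have e3 : (((i : ℝ) + 1) ^ (-(1 + ε)) : ℝ) * ((i : ℝ) + 1) ^ (1 + ε) = 1 := by
      rw [← Real.rpow_add (by positivity : (0:ℝ) < (i : ℝ) + 1),
        show (-(1 + ε) + (1 + ε) : ℝ) = 0 by ring, Real.rpow_zero]
    calc C * (2 : ℝ) ^ ((j : ℝ) * (-ε)) * ((i : ℝ) + 1) ^ (-(1 + ε)) *
          ((2 : ℝ) ^ ((j : ℝ) * (2 * ρ + ε)) * ((i : ℝ) + 1) ^ (1 + ε))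
        = C * ((2 : ℝ) ^ ((j : ℝ) * (-ε)) * (2 : ℝ) ^ ((j : ℝ) * (2 * ρ + ε))) *
          (((i : ℝ) + 1) ^ (-(1 + ε)) * ((i : ℝ) + 1) ^ (1 + ε)) := by ring
      _ = C * (2 : ℝ) ^ ((j : ℝ) * (2 * ρ)) := by rw [e2, e3, mul_one]
  set E : ℕ × ℕ → Set Ω := fun p => {ω | c p.1 p.2 ≤ |D p ω|} with hE
  have hPE : ∀ p : ℕ × ℕ, P (E p) ≤ ENNReal.ofReal (w p.1 p.2) := by
    intro p
    refine le_trans (cheb_aux P (D p) (hDmeas p) (hDsq p) _ (hcpos p.1 p.2)) ?_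
    apply ENNReal.ofReal_le_ofReal
    rw [div_le_iff₀ (by positivity : (0:ℝ) < c p.1 p.2 ^ 2)]
    rw [hwc]
    exact hDmom p
  have hwsummable : Summable (fun p : ℕ × ℕ => w p.1 p.2) := by
    have s1 : Summable (fun j : ℕ => C * ((2 : ℝ) ^ (-ε)) ^ j) := by
      apply Summable.mul_left
      exact summable_geometric_of_lt_one (Real.rpow_nonneg (by norm_num) _)
        (Real.rpow_lt_one_of_one_lt_of_neg (by norm_num) (by linarith))
    have s2 : Summable (fun i : ℕ => ((i : ℝ) + 1) ^ (-(1 + ε))) := by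
      have h0 : Summable (fun n : ℕ => (n : ℝ) ^ (-(1 + ε))) :=
        Real.summable_nat_rpow.mpr (by linarith)
      have h1 := (summable_nat_add_iff 1).mpr h0
      apply h1.congr
      intro i
      push_cast
      norm_num
    have := s1.mul_of_nonneg s2
      (fun j => by positivity)
      (fun i => (Real.rpow_pos_of_pos (by positivity) _).le)
    exact this
  have hBC : ∀ᵐ ω ∂P, {p : ℕ × ℕ | ω ∈ E p}.Finite := by
    apply MeasureTheory.ae_finite_setOf_mem
    have h1 : (∑' p : ℕ × ℕ, P (E p)) ≤
        ∑' p : ℕ × ℕ, ENNReal.ofReal (w p.1 p.2) := ENNReal.tsum_le_tsum hPE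
    have h2 : (∑' p : ℕ × ℕ, ENNReal.ofReal (w p.1 p.2)) =
        ENNReal.ofReal (∑' p : ℕ × ℕ, w p.1 p.2) :=
      (ENNReal.ofReal_tsum_of_nonneg (fun p : ℕ × ℕ => (hwpos p.1 p.2).le) hwsummable).symm
    exact ne_top_of_le_ne_top (by rw [h2]; exact ENNReal.ofReal_ne_top) h1
  -- main a.e. argument
  filter_upwards [hBC] with ω hfin
  set t : ℕ → ℝ := fun n => ∑ k ∈ Finset.Ioc 0 n, X k ω with ht
  set F := hfin.toFinset with hF
  set D' : ℝ := 1 + ∑ p ∈ F, |D p ω| / c p.1 p.2 with hD'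
  have hD'1 : 1 ≤ D' := by
    rw [hD']
    have : (0:ℝ) ≤ ∑ p ∈ F, |D p ω| / c p.1 p.2 :=
      Finset.sum_nonneg fun p _ => div_nonneg (abs_nonneg _) (hcpos p.1 p.2).le
    linarith
  have hblock : ∀ j i : ℕ, |t ((i + 1) * 2 ^ j) - t (i * 2 ^ j)| ≤ D' * c j i := by
    intro j i
    have hdiff : t ((i + 1) * 2 ^ j) - t (i * 2 ^ j) = D (j, i) ω := by
      have hc1 : i * 2 ^ j ≤ (i + 1) * 2 ^ j := Nat.mul_le_mul_right _ (Nat.le_succ i)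
      have := Finset.sum_Ioc_consecutive (fun k => X k ω)
        (Nat.zero_le (i * 2 ^ j)) hc1
      have h2 : (i + 1) * 2 ^ j = i * 2 ^ j + 2 ^ j := by ring
      rw [ht]
      simp only [hD]
      rw [← h2]
      linarith [this]
    rw [hdiff]
    by_cases hmem : (j, i) ∈ F
    · have h1 : |D (j, i) ω| / c j i ≤ ∑ p ∈ F, |D p ω| / c p.1 p.2 := by
        apply Finset.single_le_sum (f := fun p : ℕ × ℕ => |D p ω| / c p.1 p.2)
          (fun p _ => div_nonneg (abs_nonneg _) (hcpos p.1 p.2).le) hmem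
      have h2 : |D (j, i) ω| / c j i ≤ D' := by
        rw [hD']
        have : (0:ℝ) ≤ 1 := zero_le_one
        linarith
      exact (div_le_iff₀ (hcpos j i)).mp h2
    · have : ω ∉ E (j, i) := by
        intro hcon
        exact hmem (by rw [hF]; exact hfin.mem_toFinset.mpr hcon)
      have h1 : |D (j, i) ω| ≤ c j i := by
        by_contra hcon
        exact this (le_of_not_ge hcon)
      calc |D (j, i) ω| ≤ c j i := h1
        _ ≤ D' * c j i := le_mul_of_one_le_left (hcpos j i).le hD'1
  -- chaining bound for each n ≥ 1
  have hchain : ∀ n : ℕ, 1 ≤ n →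
      |t n| ≤ ((Nat.log 2 n : ℝ) + 1) * (D' * (2 * (n : ℝ)) ^ β) := by
    intro n hn
    set J : ℕ := Nat.log 2 n + 1 with hJ
    have hnJ : n < 2 ^ J := Nat.lt_pow_succ_log_self (by norm_num) n
    have hJn : 2 ^ J ≤ 2 * n := by
      rw [hJ, pow_succ]
      have := Nat.pow_log_le_self 2 (by omega : n ≠ 0)
      omega
    set φ : ℕ → ℝ := fun j =>
      D' * ((2 : ℝ) ^ ((j : ℝ) * (ρ + ε / 2)) * (2 : ℝ) ^ (((J : ℝ) - (j : ℝ)) * q)) with hφdef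
    have hφ0 : ∀ j, 0 ≤ φ j := by
      intro j
      apply mul_nonneg (by linarith)
      positivity
    have hb : ∀ j i : ℕ, (i + 1) * 2 ^ j ≤ 2 ^ J →
        |t ((i + 1) * 2 ^ j) - t (i * 2 ^ j)| ≤ φ j := by
      intro j i hij
      refine le_trans (hblock j i) ?_
      rw [hφdef, hcdef]
      have h1 : ((i : ℝ) + 1) ^ q ≤ (2 : ℝ) ^ (((J : ℝ) - (j : ℝ)) * q) := by
        have hle : (i : ℝ) + 1 ≤ (2 : ℝ) ^ ((J : ℝ) - (j : ℝ)) := by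
          rw [Real.rpow_sub (by norm_num : (0:ℝ) < 2),
            Real.rpow_natCast, Real.rpow_natCast, le_div_iff₀ (by positivity)]
          have : ((i + 1) * 2 ^ j : ℕ) ≤ (2 ^ J : ℕ) := hij
          exact_mod_cast this
        calc ((i : ℝ) + 1) ^ q ≤ ((2 : ℝ) ^ ((J : ℝ) - (j : ℝ))) ^ q :=
              Real.rpow_le_rpow (by positivity) hle hq0
          _ = (2 : ℝ) ^ (((J : ℝ) - (j : ℝ)) * q) :=
              (Real.rpow_mul (by norm_num) _ _).symm
      have h2 : (0:ℝ) ≤ (2 : ℝ) ^ ((j : ℝ) * (ρ + ε / 2)) := by positivity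
      have := mul_le_mul_of_nonneg_left h1 h2
      calc D' * ((2 : ℝ) ^ ((j : ℝ) * (ρ + ε / 2)) * ((i : ℝ) + 1) ^ q)
          ≤ D' * ((2 : ℝ) ^ ((j : ℝ) * (ρ + ε / 2)) *
              (2 : ℝ) ^ (((J : ℝ) - (j : ℝ)) * q)) := by
            apply mul_le_mul_of_nonneg_left this (by linarith)
      _ = D' * ((2 : ℝ) ^ ((j : ℝ) * (ρ + ε / 2)) *
              (2 : ℝ) ^ (((J : ℝ) - (j : ℝ)) * q)) := rfl
    have hmain := chain_aux t φ hφ0 (2 ^ J) hb J 0 n (dvd_zero _) hnJ (by omega)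
    have ht0 : t 0 = 0 := by simp [ht]
    rw [zero_add, ht0, sub_zero] at hmain
    -- bound each φ j by D' * 2^(J*β)
    have hφbound : ∀ j ∈ Finset.range J, φ j ≤ D' * (2 : ℝ) ^ ((J : ℝ) * β) := by
      intro j hj
      have hjJ : (j : ℝ) ≤ (J : ℝ) := by
        exact_mod_cast (Finset.mem_range.mp hj).le
      have hj0 : (0:ℝ) ≤ (j : ℝ) := Nat.cast_nonneg j
      simp only [hφdef]
      rw [← Real.rpow_add (by norm_num : (0:ℝ) < 2)]
      apply mul_le_mul_of_nonneg_left _ (by linarith : (0:ℝ) ≤ D')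
      apply Real.rpow_le_rpow_of_exponent_le (by norm_num)
      rw [hβ, hq]
      rcases le_or_gt ρ (1 / 2 : ℝ) with hcase | hcase
      · rw [max_eq_right hcase]
        nlinarith
      · rw [max_eq_left hcase.le]
        nlinarith
    have hsumb : ∑ j ∈ Finset.range J, φ j ≤ (J : ℝ) * (D' * (2 : ℝ) ^ ((J : ℝ) * β)) := by
      have := Finset.sum_le_card_nsmul (Finset.range J) φ _ hφbound
      rw [Finset.card_range] at this
      rwa [nsmul_eq_mul] at this
    have hJb : (2 : ℝ) ^ ((J : ℝ) * β) ≤ (2 * (n : ℝ)) ^ β := by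
      rw [Real.rpow_mul (by norm_num : (0:ℝ) ≤ 2)]
      apply Real.rpow_le_rpow (by positivity) _ hβ0
      rw [Real.rpow_natCast]
      have : ((2 ^ J : ℕ) : ℝ) ≤ ((2 * n : ℕ) : ℝ) := by exact_mod_cast hJn
      push_cast at this
      linarith
    have hJcast : (J : ℝ) = (Nat.log 2 n : ℝ) + 1 := by rw [hJ]; push_cast; ring
    calc |t n| ≤ ∑ j ∈ Finset.range J, φ j := hmain
      _ ≤ (J : ℝ) * (D' * (2 : ℝ) ^ ((J : ℝ) * β)) := hsumb
      _ ≤ (J : ℝ) * (D' * (2 * (n : ℝ)) ^ β) := by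
          apply mul_le_mul_of_nonneg_left _ (by positivity)
          apply mul_le_mul_of_nonneg_left hJb (by linarith)
      _ = ((Nat.log 2 n : ℝ) + 1) * (D' * (2 * (n : ℝ)) ^ β) := by rw [hJcast]
  -- conclusion by squeezing
  have hIcc : ∀ n : ℕ, (∑ k ∈ Finset.Icc 1 n, X k ω) = t n := by
    intro n
    rw [ht]
    congr 1
  apply squeeze_zero_norm' (a := fun n : ℕ =>
    (D' * (2 : ℝ) ^ β) * (((Nat.log 2 n : ℝ) + 1) * (n : ℝ) ^ (-(ε / 2))))
  · filter_upwards [eventually_ge_atTop 1] with n hn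
    have hn0 : (0:ℝ) < (n : ℝ) := by exact_mod_cast hn
    have hpow : (0:ℝ) < (n : ℝ) ^ (max ρ (1 / 2) + ε) := Real.rpow_pos_of_pos hn0 _
    rw [hIcc, Real.norm_eq_abs, abs_div, abs_of_pos hpow, div_le_iff₀ hpow]
    have h2 : (2 * (n : ℝ)) ^ β = (2:ℝ) ^ β * (n : ℝ) ^ β :=
      Real.mul_rpow (by norm_num) hn0.le
    have h3 : (n : ℝ) ^ β = (n : ℝ) ^ (-(ε / 2)) * (n : ℝ) ^ (max ρ (1 / 2) + ε) := by
      rw [← Real.rpow_add hn0]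
      congr 1
      rw [hβ]; ring
    calc |t n| ≤ ((Nat.log 2 n : ℝ) + 1) * (D' * (2 * (n : ℝ)) ^ β) := hchain n hn
      _ = (D' * (2 : ℝ) ^ β) * (((Nat.log 2 n : ℝ) + 1) * (n : ℝ) ^ (-(ε / 2))) *
          (n : ℝ) ^ (max ρ (1 / 2) + ε) := by
          rw [h2, h3]; ring
  · have hlog2 : (0:ℝ) < Real.log 2 := Real.log_pos (by norm_num)
    -- limit of the auxiliary real function
    have t1 : Tendsto (fun x : ℝ => Real.log x / x ^ (ε / 2)) atTop (𝓝 0) :=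
      (isLittleO_log_rpow_atTop (by linarith)).tendsto_div_nhds_zero
    have t1' : Tendsto (fun n : ℕ => Real.log n / (n : ℝ) ^ (ε / 2)) atTop (𝓝 0) :=
      t1.comp tendsto_natCast_atTop_atTop
    have t2 : Tendsto (fun x : ℝ => x ^ (-(ε / 2))) atTop (𝓝 0) :=
      tendsto_rpow_neg_atTop (by linarith)
    have t2' : Tendsto (fun n : ℕ => (n : ℝ) ^ (-(ε / 2))) atTop (𝓝 0) :=
      t2.comp tendsto_natCast_atTop_atTop
    have hh : Tendsto (fun n : ℕ =>
        (1 / Real.log 2) * (Real.log n / (n : ℝ) ^ (ε / 2)) + 2 * (n : ℝ) ^ (-(ε / 2)))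
        atTop (𝓝 0) := by
      have := (t1'.const_mul (1 / Real.log 2)).add (t2'.const_mul 2)
      simpa using this
    have hmid : Tendsto (fun n : ℕ =>
        ((Nat.log 2 n : ℝ) + 1) * (n : ℝ) ^ (-(ε / 2))) atTop (𝓝 0) := by
      apply squeeze_zero' (g := fun n : ℕ =>
        (1 / Real.log 2) * (Real.log n / (n : ℝ) ^ (ε / 2)) + 2 * (n : ℝ) ^ (-(ε / 2)))
        _ _ hh
      · filter_upwards with n
        positivity
      · filter_upwards [eventually_ge_atTop 1] with n hn
        have hn0 : (0:ℝ) < (n : ℝ) := by exact_mod_cast hn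
        have hlogle : (Nat.log 2 n : ℝ) ≤ Real.logb 2 n := by
          rw [Real.le_logb_iff_rpow_le (by norm_num) hn0]
          rw [Real.rpow_natCast]
          have := Nat.pow_log_le_self 2 (by omega : n ≠ 0)
          exact_mod_cast this
        have hrw : Real.logb 2 n = (1 / Real.log 2) * Real.log n := by
          rw [Real.logb, div_eq_mul_inv, mul_comm, one_div]
        have hrpos : (0:ℝ) < (n : ℝ) ^ (-(ε / 2)) := Real.rpow_pos_of_pos hn0 _
        have e4 : Real.log n * (n : ℝ) ^ (-(ε / 2)) = Real.log n / (n : ℝ) ^ (ε / 2) := by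
          rw [Real.rpow_neg hn0.le]
          ring
        have hlogn : (0:ℝ) ≤ Real.log n := Real.log_nonneg (by exact_mod_cast hn)
        calc ((Nat.log 2 n : ℝ) + 1) * (n : ℝ) ^ (-(ε / 2))
            ≤ ((1 / Real.log 2) * Real.log n + 2) * (n : ℝ) ^ (-(ε / 2)) := by
              apply mul_le_mul_of_nonneg_right _ hrpos.le
              rw [← hrw]
              linarith
          _ = (1 / Real.log 2) * (Real.log n * (n : ℝ) ^ (-(ε / 2))) +
              2 * (n : ℝ) ^ (-(ε / 2)) := by ring
          _ = (1 / Real.log 2) * (Real.log n / (n : ℝ) ^ (ε / 2)) +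
              2 * (n : ℝ) ^ (-(ε / 2)) := by rw [e4]
    have := hmid.const_mul (D' * (2 : ℝ) ^ β)
    simpa using this
end

section
/- Fix an integer d ≥ 1 and constants δ₀, c₁ > 0. There exists a constant C₂ > 0, depending only on d, δ₀, c₁, with the following property: for every integer N ≥ 1 and every ℝ^d-valued random variable S whose characteristic function satisfies |E(e^{i⟨ξ, S⟩})| ≤ e^{−c₁ N |ξ|²} for every ξ ∈ ℝ^d with |ξ| ≤ δ₀, one has P(S ∈ Q) ≤ C₂ N^{−d/2} for every cube Q ⊂ ℝ^d of side length 1. -/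
open MeasureTheory Filter Topology

local notation "⟪" x ", " y "⟫" => @inner ℝ _ _ x y

private lemma norm_exp_I_mul' (t : ℝ) : ‖Complex.exp (Complex.I * t)‖ = 1 := by
  simp [Complex.norm_exp, Complex.mul_re]

private lemma integrable_exp_I_mul' {α : Type*} [MeasurableSpace α] {μ : Measure α}
    [IsFiniteMeasure μ] {g : α → ℝ} (hg : Measurable g) :
    Integrable (fun x => Complex.exp (Complex.I * g x)) μ := by
  apply Integrable.mono' (integrable_const (1:ℝ))
  · exact (Complex.measurable_exp.comp
      (measurable_const.mul (Complex.measurable_ofReal.comp hg))).aestronglyMeasurable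
  · filter_upwards with x
    rw [norm_exp_I_mul']

private lemma gauss_integrable' (d : ℕ) {b : ℝ} (hb : 0 < b) :
    Integrable (fun v : EuclideanSpace ℝ (Fin d) => Real.exp (-b * ‖v‖^2)) := by
  have h := (GaussianFourier.integrable_cexp_neg_mul_sq_norm_add
    (V := EuclideanSpace ℝ (Fin d)) (b := (b:ℂ)) (by simpa using hb) 0 0).norm
  apply h.congr
  filter_upwards with v
  rw [Complex.norm_exp]
  have : ((-(b:ℂ)) * (‖v‖:ℂ) ^ 2
      + 0 * ((inner ℝ (0 : EuclideanSpace ℝ (Fin d)) v : ℝ):ℂ)).re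
      = -b * ‖v‖^2 := by simp [← Complex.ofReal_pow]
  rw [this]

private lemma gauss_integral' (d : ℕ) {b : ℝ} (hb : 0 < b) :
    ∫ v : EuclideanSpace ℝ (Fin d), Real.exp (-b * ‖v‖^2)
      = (Real.pi / b) ^ ((d:ℝ) / 2) := by
  rw [GaussianFourier.integral_rexp_neg_mul_sq_norm hb]
  norm_num [finrank_euclideanSpace_fin]

set_option maxHeartbeats 2000000 in
/-- The anticoncentration bound derived from Lemma A.1 of the paper: if the characteristic
function of an `ℝ^d`-valued random variable `S` satisfies
`|E(e^{i⟨ξ,S⟩})| ≤ e^{−c₁N|ξ|²}` for `|ξ| ≤ δ₀`, then `P(S ∈ Q) ≤ C₂ N^{−d/2}` for every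
unit cube `Q`, with `C₂` depending only on `d, δ₀, c₁`. -/
theorem stmt_17
    (d : ℕ) (hd : 1 ≤ d) (δ₀ c₁ : ℝ) (hδ₀ : 0 < δ₀) (hc₁ : 0 < c₁) :
    ∃ C₂ : ℝ, 0 < C₂ ∧
      ∀ N : ℕ, 1 ≤ N →
      ∀ (Ω : Type) (_ : MeasurableSpace Ω) (P : Measure Ω), IsProbabilityMeasure P →
      ∀ S : Ω → EuclideanSpace ℝ (Fin d), Measurable S →
      (∀ ξ : EuclideanSpace ℝ (Fin d), ‖ξ‖ ≤ δ₀ →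
        ‖∫ ω, Complex.exp (Complex.I * ((inner ℝ ξ (S ω) : ℝ) : ℂ)) ∂P‖
          ≤ Real.exp (-c₁ * N * ‖ξ‖ ^ 2)) →
      ∀ a : EuclideanSpace ℝ (Fin d),
        (P {ω | ∀ i, a i ≤ S ω i ∧ S ω i ≤ a i + 1}).toReal
          ≤ C₂ * (N : ℝ) ^ (-(d : ℝ) / 2) := by
  classical
  have hdpos : (0:ℝ) < d := by exact_mod_cast hd
  have hsd : 0 < Real.sqrt d := Real.sqrt_pos.2 hdpos
  set r : ℝ := min (δ₀ / 2) (Real.sqrt d)⁻¹ with hr_def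
  have hr : 0 < r := lt_min (by positivity) (by positivity)
  set B : Set (EuclideanSpace ℝ (Fin d)) := Metric.closedBall 0 r with hB_def
  have hBmeas : MeasurableSet B := measurableSet_closedBall
  have hBfin : volume B < ⊤ := measure_closedBall_lt_top
  have hBcompact : IsCompact B := isCompact_closedBall _ _
  set volB : ℝ := (volume B).toReal with hvolB_def
  have hvolB : 0 < volB :=
    ENNReal.toReal_pos (Metric.measure_closedBall_pos volume (0:EuclideanSpace ℝ (Fin d)) hr).ne'
      hBfin.ne
  set K : ℝ := (Real.pi / c₁) ^ ((d:ℝ)/2) with hK_def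
  have hK : 0 < K := Real.rpow_pos_of_pos (by positivity) _
  refine ⟨4 * K / volB, by positivity, ?_⟩
  intro N hN Ω mΩ P hP S hS hφ a
  set b : ℝ := c₁ * N with hb_def
  have hb : 0 < b := by positivity
  set c : EuclideanSpace ℝ (Fin d) := WithLp.toLp 2 (fun i => a i + 1/2) with hc_def
  set μB : Measure (EuclideanSpace ℝ (Fin d)) := volume.restrict B with hμB_def
  haveI : IsFiniteMeasure μB := ⟨by
    rw [hμB_def, Measure.restrict_apply_univ]; exact hBfin⟩
  set v : EuclideanSpace ℝ (Fin d) → ℂ :=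
    fun y => ∫ ξ in B, Complex.exp (Complex.I * ((⟪ξ, y⟫ : ℝ) : ℂ)) with hv_def
  -- continuity of v
  have hv_cont : Continuous v := by
    rw [hv_def]
    apply continuous_of_dominated (bound := fun _ => (1:ℝ))
    · intro y
      exact (integrable_exp_I_mul' (μ := μB)
        ((continuous_id.inner continuous_const).measurable)).aestronglyMeasurable
    · intro y
      filter_upwards with ξ
      rw [norm_exp_I_mul']
    · exact integrable_const 1
    · filter_upwards with ξ
      exact Complex.continuous_exp.comp (continuous_const.mul
        (Complex.continuous_ofReal.comp (continuous_const.inner continuous_id)))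
  have hv_norm : ∀ y, ‖v y‖ ≤ volB := by
    intro y
    calc ‖v y‖ ≤ ∫ _ in B, (1:ℝ) :=
          norm_integral_le_of_norm_le (integrable_const 1)
            (Filter.Eventually.of_forall fun ξ => (norm_exp_I_mul' _).le)
      _ = volB := by rw [setIntegral_const, Measure.real, ← hvolB_def]; simp
  -- distance from cube points to center
  have hdist : ∀ x : EuclideanSpace ℝ (Fin d),
      (∀ i, a i ≤ x i ∧ x i ≤ a i + 1) → ‖x - c‖ ≤ Real.sqrt d / 2 := by
    intro x hx
    have h1 : ‖x - c‖ ≤ Real.sqrt ((d:ℝ) / 4) := by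
      rw [EuclideanSpace.norm_eq]
      apply Real.sqrt_le_sqrt
      have : ∀ i, ‖(x - c) i‖ ^ 2 ≤ (1/2 : ℝ)^2 := by
        intro i
        have hxc : (x - c) i = x i - (a i + 1/2) := by
          simp [hc_def, PiLp.sub_apply]
        rw [hxc, Real.norm_eq_abs, sq_abs]
        have := (hx i).1; have := (hx i).2
        nlinarith
      calc ∑ i, ‖(x - c) i‖ ^ 2 ≤ ∑ _i : Fin d, (1/2:ℝ)^2 :=
            Finset.sum_le_sum fun i _ => this i
        _ = (d:ℝ) / 4 := by simp; ring
    have h2 : Real.sqrt ((d:ℝ)/4) = Real.sqrt d / 2 := by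
      rw [show (d:ℝ)/4 = (d:ℝ) * (1/2:ℝ)^2 by ring, Real.sqrt_mul (le_of_lt hdpos),
        Real.sqrt_sq (by norm_num)]
      ring
    rw [h2] at h1; exact h1
  -- cosine lower bound on the ball
  have hcos : ∀ y : EuclideanSpace ℝ (Fin d), ‖y‖ ≤ Real.sqrt d / 2 →
      ∀ ξ ∈ B, (1:ℝ)/2 ≤ Real.cos (⟪ξ, y⟫ : ℝ) := by
    intro y hy ξ hξ
    have hξn : ‖ξ‖ ≤ r := by rwa [hB_def, Metric.mem_closedBall, dist_zero_right] at hξ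
    have h1 : |(⟪ξ, y⟫ : ℝ)| ≤ 1/2 := by
      calc |(⟪ξ, y⟫ : ℝ)| ≤ ‖ξ‖ * ‖y‖ := abs_real_inner_le_norm ξ y
        _ ≤ (Real.sqrt d)⁻¹ * (Real.sqrt d / 2) := by
            apply mul_le_mul (hξn.trans (min_le_right _ _)) hy (norm_nonneg _)
            positivity
        _ = 1/2 := by field_simp
    have h2 := Real.one_sub_sq_div_two_le_cos (x := (⟪ξ, y⟫ : ℝ))
    have h3 : (⟪ξ, y⟫ : ℝ)^2 ≤ 1/4 := by
      nlinarith [sq_abs (⟪ξ, y⟫ : ℝ), abs_nonneg (⟪ξ, y⟫ : ℝ)]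
    linarith
  -- real part lower bound
  have hre : ∀ y : EuclideanSpace ℝ (Fin d), ‖y‖ ≤ Real.sqrt d / 2 →
      volB / 2 ≤ (v y).re := by
    intro y hy
    have hint : Integrable (fun ξ => Complex.exp (Complex.I * ((⟪ξ, y⟫ : ℝ) : ℂ))) μB :=
      integrable_exp_I_mul' ((continuous_id.inner continuous_const).measurable)
    have hre_eq : (v y).re = ∫ ξ in B, Real.cos (⟪ξ, y⟫ : ℝ) := by
      calc (v y).re = Complex.reCLM (v y) := rfl
        _ = ∫ ξ in B, Complex.reCLM (Complex.exp (Complex.I * ((⟪ξ, y⟫ : ℝ) : ℂ))) := by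
            rw [hv_def]
            exact (ContinuousLinearMap.integral_comp_comm Complex.reCLM hint).symm
        _ = ∫ ξ in B, Real.cos (⟪ξ, y⟫ : ℝ) := by
            congr 1
            funext ξ
            show (Complex.exp (Complex.I * ((⟪ξ, y⟫ : ℝ) : ℂ))).re = Real.cos (⟪ξ, y⟫ : ℝ)
            rw [mul_comm, Complex.exp_ofReal_mul_I_re]
    rw [hre_eq]
    have hc_int : IntegrableOn (fun ξ : EuclideanSpace ℝ (Fin d) =>
        Real.cos (⟪ξ, y⟫ : ℝ)) B volume :=
      (Real.continuous_cos.comp (continuous_id.inner continuous_const)).continuousOn.integrableOn_compact hBcompact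
    calc volB / 2 = ∫ _ in B, (1/2 : ℝ) := by rw [setIntegral_const, Measure.real, ← hvolB_def]; simp; ring
      _ ≤ ∫ ξ in B, Real.cos (⟪ξ, y⟫ : ℝ) :=
          setIntegral_mono_on (integrableOn_const hBfin.ne) hc_int hBmeas
            (fun ξ hξ => hcos y hy ξ hξ)
  -- the event
  set E : Set Ω := {ω | ∀ i, a i ≤ S ω i ∧ S ω i ≤ a i + 1} with hE_def
  have hcoord : ∀ i : Fin d, Measurable fun ω => S ω i := fun i =>
    (EuclideanSpace.proj (𝕜 := ℝ) i).continuous.measurable.comp hS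
  have hEmeas : MeasurableSet E := by
    have : E = ⋂ i, ({ω | a i ≤ S ω i} ∩ {ω | S ω i ≤ a i + 1}) := by
      ext ω; simp [hE_def, Set.mem_iInter, forall_and]
    rw [this]
    exact MeasurableSet.iInter fun i =>
      (measurableSet_le measurable_const (hcoord i)).inter
        (measurableSet_le (hcoord i) measurable_const)
  -- integrand and its integrability
  set R : ℝ := ∫ ω, ‖v (S ω - c)‖^2 ∂P with hR_def
  have hmeas_vSc : Measurable fun ω => v (S ω - c) :=
    hv_cont.measurable.comp (hS.sub measurable_const)
  have hint_R : Integrable (fun ω => ‖v (S ω - c)‖^2) P := by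
    apply Integrable.mono' (integrable_const (volB^2))
    · exact (hmeas_vSc.norm.pow measurable_const).aestronglyMeasurable
    · filter_upwards with ω
      rw [Real.norm_eq_abs, abs_of_nonneg (by positivity)]
      exact pow_le_pow_left₀ (norm_nonneg _) (hv_norm _) 2
  -- lower bound
  have hlow : (volB/2)^2 * (P E).toReal ≤ R := by
    have hpt : ∀ ω ∈ E, (volB/2)^2 ≤ ‖v (S ω - c)‖^2 := by
      intro ω hω
      have h1 : volB/2 ≤ (v (S ω - c)).re := hre _ (hdist _ hω)
      have h2 : (v (S ω - c)).re ≤ ‖v (S ω - c)‖ := by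
        calc (v (S ω - c)).re ≤ |(v (S ω - c)).re| := le_abs_self _
          _ ≤ ‖v (S ω - c)‖ := Complex.abs_re_le_norm _
          _ = ‖v (S ω - c)‖ := rfl
      exact pow_le_pow_left₀ (by positivity) (h1.trans h2) 2
    calc (volB/2)^2 * (P E).toReal = ∫ _ in E, (volB/2)^2 ∂P := by
          rw [setIntegral_const, Measure.real]; simp [mul_comm]
      _ ≤ ∫ ω in E, ‖v (S ω - c)‖^2 ∂P :=
          setIntegral_mono_on (integrableOn_const (measure_ne_top P E))
            (hint_R.integrableOn) hEmeas hpt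
      _ ≤ R := setIntegral_le_integral hint_R
            (Filter.Eventually.of_forall fun ω => by positivity)
  -- the product measure
  set ν : Measure (EuclideanSpace ℝ (Fin d) × EuclideanSpace ℝ (Fin d)) := μB.prod μB
    with hν_def
  haveI : IsFiniteMeasure ν := by rw [hν_def]; infer_instance
  -- step 1 : |v y|² as a double integral
  have step1 : ∀ y : EuclideanSpace ℝ (Fin d), ((‖v y‖^2 : ℝ) : ℂ)
      = ∫ p, Complex.exp (Complex.I * ((⟪p.1 - p.2, y⟫ : ℝ) : ℂ)) ∂ν := by
    intro y
    have hprod_int : Integrable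
        (fun p : EuclideanSpace ℝ (Fin d) × EuclideanSpace ℝ (Fin d) =>
          Complex.exp (Complex.I * ((⟪p.1 - p.2, y⟫ : ℝ) : ℂ))) ν :=
      integrable_exp_I_mul'
        (((continuous_fst.sub continuous_snd).inner continuous_const).measurable)
    rw [hν_def] at hprod_int ⊢
    rw [integral_prod _ hprod_int]
    have hvy : v y = ∫ ξ, Complex.exp (Complex.I * ((⟪ξ, y⟫ : ℝ) : ℂ)) ∂μB := by
      rw [hv_def]
    have key : ∀ ξ η : EuclideanSpace ℝ (Fin d),
        Complex.exp (Complex.I * ((⟪ξ, y⟫ : ℝ) : ℂ)) *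
          (starRingEnd ℂ) (Complex.exp (Complex.I * ((⟪η, y⟫ : ℝ) : ℂ)))
        = Complex.exp (Complex.I * ((⟪ξ - η, y⟫ : ℝ) : ℂ)) := by
      intro ξ η
      rw [← Complex.exp_conj, ← Complex.exp_add]
      congr 1
      rw [inner_sub_left]
      simp only [map_mul, Complex.conj_I, Complex.conj_ofReal]
      push_cast
      ring
    calc ((‖v y‖^2 : ℝ) : ℂ) = v y * (starRingEnd ℂ) (v y) := by
          rw [Complex.mul_conj, Complex.normSq_eq_norm_sq]
      _ = ∫ ξ, Complex.exp (Complex.I * ((⟪ξ, y⟫ : ℝ) : ℂ)) * (starRingEnd ℂ) (v y) ∂μB := by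
          rw [hvy, integral_mul_const]
      _ = ∫ ξ, ∫ η, Complex.exp (Complex.I * ((⟪ξ - η, y⟫ : ℝ) : ℂ)) ∂μB ∂μB := by
          congr 1
          funext ξ
          rw [hvy, ← integral_conj, ← integral_const_mul]
          congr 1
          funext η
          exact key ξ η
  -- Fubini
  have hFmeas : Measurable (Function.uncurry fun (ω : Ω)
      (p : EuclideanSpace ℝ (Fin d) × EuclideanSpace ℝ (Fin d)) =>
      Complex.exp (Complex.I * ((⟪p.1 - p.2, S ω - c⟫ : ℝ) : ℂ))) := by
    have hm : Measurable fun q : Ω × (EuclideanSpace ℝ (Fin d) × EuclideanSpace ℝ (Fin d)) =>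
        ((q.2.1 - q.2.2, S q.1 - c) :
          EuclideanSpace ℝ (Fin d) × EuclideanSpace ℝ (Fin d)) :=
      (measurable_snd.fst.sub measurable_snd.snd).prodMk
        ((hS.comp measurable_fst).sub measurable_const)
    have h1 : Measurable fun q : Ω × (EuclideanSpace ℝ (Fin d) × EuclideanSpace ℝ (Fin d)) =>
        (⟪q.2.1 - q.2.2, S q.1 - c⟫ : ℝ) := continuous_inner.measurable.comp hm
    exact Complex.measurable_exp.comp
      (measurable_const.mul (Complex.measurable_ofReal.comp h1))
  have hFint : Integrable (Function.uncurry fun (ω : Ω)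
      (p : EuclideanSpace ℝ (Fin d) × EuclideanSpace ℝ (Fin d)) =>
      Complex.exp (Complex.I * ((⟪p.1 - p.2, S ω - c⟫ : ℝ) : ℂ))) (P.prod ν) := by
    apply Integrable.mono' (integrable_const (1:ℝ)) hFmeas.aestronglyMeasurable
    filter_upwards with q
    exact (norm_exp_I_mul' _).le
  have hRC : ((R : ℝ) : ℂ) = ∫ p, (∫ ω, Complex.exp
      (Complex.I * ((⟪p.1 - p.2, S ω - c⟫ : ℝ) : ℂ)) ∂P) ∂ν := by
    calc ((R : ℝ) : ℂ) = ∫ ω, ((‖v (S ω - c)‖^2 : ℝ) : ℂ) ∂P := by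
          rw [hR_def]; exact integral_ofReal.symm
      _ = ∫ ω, (∫ p, Complex.exp
            (Complex.I * ((⟪p.1 - p.2, S ω - c⟫ : ℝ) : ℂ)) ∂ν) ∂P := by
          congr 1
          funext ω
          exact step1 _
      _ = _ := integral_integral_swap hFint
  -- the Gaussian bound function
  have hbound_cont : Continuous fun p : EuclideanSpace ℝ (Fin d) × EuclideanSpace ℝ (Fin d) =>
      Real.exp (-b * ‖p.1 - p.2‖^2) := by
    apply Real.continuous_exp.comp
    exact (continuous_const.mul ((continuous_fst.sub continuous_snd).norm.pow 2))
  have hbound_int : Integrable (fun p : EuclideanSpace ℝ (Fin d) × EuclideanSpace ℝ (Fin d) =>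
      Real.exp (-b * ‖p.1 - p.2‖^2)) ν := by
    apply Integrable.mono' (integrable_const (1:ℝ)) hbound_cont.aestronglyMeasurable
    filter_upwards with p
    rw [Real.norm_eq_abs, abs_of_nonneg (Real.exp_pos _).le]
    apply Real.exp_le_one_iff.2
    nlinarith [sq_nonneg ‖p.1 - p.2‖]
  -- characteristic function bound, a.e. on ν
  have hae : ∀ᵐ p ∂ν, ‖∫ ω, Complex.exp
      (Complex.I * ((⟪p.1 - p.2, S ω - c⟫ : ℝ) : ℂ)) ∂P‖ ≤ Real.exp (-b * ‖p.1 - p.2‖^2) := by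
    rw [hν_def, hμB_def, Measure.prod_restrict]
    filter_upwards [ae_restrict_mem (hBmeas.prod hBmeas)] with p hp
    have hp1 : ‖p.1‖ ≤ r := by
      have := hp.1; rwa [hB_def, Metric.mem_closedBall, dist_zero_right] at this
    have hp2 : ‖p.2‖ ≤ r := by
      have := hp.2; rwa [hB_def, Metric.mem_closedBall, dist_zero_right] at this
    have ht : ‖p.1 - p.2‖ ≤ δ₀ := by
      have h2r : r ≤ δ₀ / 2 := min_le_left _ _
      calc ‖p.1 - p.2‖ ≤ ‖p.1‖ + ‖p.2‖ := norm_sub_le _ _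
        _ ≤ δ₀ := by linarith
    have hsplit : (∫ ω, Complex.exp
        (Complex.I * ((⟪p.1 - p.2, S ω - c⟫ : ℝ) : ℂ)) ∂P)
        = (∫ ω, Complex.exp (Complex.I * ((⟪p.1 - p.2, S ω⟫ : ℝ) : ℂ)) ∂P) *
          Complex.exp (-(Complex.I * ((⟪p.1 - p.2, c⟫ : ℝ) : ℂ))) := by
      rw [← integral_mul_const]
      congr 1
      funext ω
      rw [← Complex.exp_add]
      congr 1
      rw [inner_sub_right]
      push_cast
      ring
    rw [hsplit, norm_mul]
    have h2 : ‖Complex.exp (-(Complex.I * ((⟪p.1 - p.2, c⟫ : ℝ) : ℂ)))‖ = 1 := by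
      rw [Complex.norm_exp]
      simp [Complex.mul_re]
    rw [h2, mul_one]
    calc ‖∫ ω, Complex.exp (Complex.I * ((⟪p.1 - p.2, S ω⟫ : ℝ) : ℂ)) ∂P‖
        ≤ Real.exp (-c₁ * N * ‖p.1 - p.2‖ ^ 2) := hφ _ ht
      _ = Real.exp (-b * ‖p.1 - p.2‖^2) := by rw [hb_def]; ring_nf
  -- pointwise Gaussian integral bound
  have hGint := gauss_integrable' d hb
  have inner_bound : ∀ ξ : EuclideanSpace ℝ (Fin d),
      ∫ η in B, Real.exp (-b * ‖ξ - η‖^2) ≤ (Real.pi/b)^((d:ℝ)/2) := by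
    intro ξ
    have h1 : Integrable (fun η : EuclideanSpace ℝ (Fin d) =>
        Real.exp (-b * ‖ξ - η‖^2)) volume :=
      (integrable_comp_sub_left (fun t : EuclideanSpace ℝ (Fin d) =>
        Real.exp (-b * ‖t‖^2)) ξ).2 hGint
    calc ∫ η in B, Real.exp (-b * ‖ξ - η‖^2)
        ≤ ∫ η, Real.exp (-b * ‖ξ - η‖^2) :=
          setIntegral_le_integral h1 (Filter.Eventually.of_forall fun η => (Real.exp_pos _).le)
      _ = ∫ t : EuclideanSpace ℝ (Fin d), Real.exp (-b * ‖t‖^2) :=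
          integral_sub_left_eq_self (fun t : EuclideanSpace ℝ (Fin d) =>
            Real.exp (-b * ‖t‖^2)) volume ξ
      _ = (Real.pi/b)^((d:ℝ)/2) := gauss_integral' d hb
  -- continuity of the partial integral
  have hcont2 : Continuous fun ξ : EuclideanSpace ℝ (Fin d) =>
      ∫ η in B, Real.exp (-b * ‖ξ - η‖^2) := by
    apply continuous_of_dominated (bound := fun _ => (1:ℝ)) (μ := μB)
    · intro ξ
      exact ((Real.continuous_exp.comp (continuous_const.mul
        ((continuous_const.sub continuous_id).norm.pow 2)))).aestronglyMeasurable
    · intro ξ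
      filter_upwards with η
      rw [Real.norm_eq_abs, abs_of_nonneg (Real.exp_pos _).le]
      apply Real.exp_le_one_iff.2
      nlinarith [sq_nonneg ‖ξ - η‖]
    · exact integrable_const 1
    · filter_upwards with η
      exact Real.continuous_exp.comp (continuous_const.mul
        ((continuous_id.sub continuous_const).norm.pow 2))
  -- the double integral bound
  have step6 : ∫ p, Real.exp (-b * ‖p.1 - p.2‖^2) ∂ν ≤ volB * (Real.pi/b)^((d:ℝ)/2) := by
    rw [hν_def] at hbound_int ⊢
    rw [integral_prod _ hbound_int]
    calc ∫ ξ, ∫ η, Real.exp (-b * ‖ξ - η‖^2) ∂μB ∂μB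
        ≤ ∫ _ in B, (Real.pi/b)^((d:ℝ)/2) :=
          setIntegral_mono_on (hcont2.continuousOn.integrableOn_compact hBcompact)
            (integrableOn_const hBfin.ne) hBmeas (fun ξ _ => inner_bound ξ)
      _ = volB * (Real.pi/b)^((d:ℝ)/2) := by rw [setIntegral_const, Measure.real, ← hvolB_def]; simp
  -- upper bound for R
  have hR_nonneg : 0 ≤ R := integral_nonneg fun ω => by positivity
  have hup : R ≤ volB * (Real.pi/b)^((d:ℝ)/2) := by
    have hRabs : R = ‖((R:ℝ):ℂ)‖ := by
      rw [Complex.norm_real, Real.norm_eq_abs, abs_of_nonneg hR_nonneg]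
    rw [hRabs, hRC]
    exact (norm_integral_le_of_norm_le hbound_int hae).trans step6
  -- arithmetic conclusion
  have hNpos : (0:ℝ) < N := by exact_mod_cast hN
  set M : ℝ := (N:ℝ) ^ (-(d:ℝ)/2) with hM_def
  have hM : 0 < M := Real.rpow_pos_of_pos hNpos _
  have hπb : (Real.pi/b)^((d:ℝ)/2) = K * M := by
    rw [hK_def, hM_def, hb_def,
      show Real.pi/(c₁*N) = (Real.pi/c₁) * ((N:ℝ))⁻¹ by field_simp,
      Real.mul_rpow (by positivity) (by positivity),
      Real.inv_rpow (le_of_lt hNpos), ← Real.rpow_neg (le_of_lt hNpos), neg_div]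
  rw [hπb] at hup
  have hfinal : (P E).toReal ≤ (volB * (K * M)) / (volB/2)^2 := by
    rw [le_div_iff₀ (by positivity)]
    nlinarith [hlow.trans hup]
  calc (P E).toReal ≤ (volB * (K * M)) / (volB/2)^2 := hfinal
    _ = 4 * K / volB * M := by field_simp; ring
end
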